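/- arXiv:1603.04879 — 8 statements merged into one kernel-verified Lean document; each statement's English description precedes it below -/
import Mathlib

section
/- Let G be a finite p-group with an abelian maximal subgroup A, and suppose G is nonabelian. Then for every g ∈ G \ A, the derived subgroup G' equals the set {[g,a] : a ∈ A}, and consequently |G'| = |A : C_A(g)|. -/
open scoped commutatorElement

theorem stmt0 {p : ℕ} (hp : p.Prime) {G : Type} [Group G] [Finite G]
    (hG : IsPGroup p G) (A : Subgroup G) (hA : IsMulCommutative A) (hAmax : A.index = p)
    (hnab : ∃ x y : G, x * y ≠ y * x) (g : G) (hg : g ∉ A) :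
    ((commutator G : Subgroup G) : Set G) = {x : G | ∃ a ∈ A, x = ⁅g, a⁆} ∧
      Nat.card (commutator G) = (Subgroup.centralizer {g}).relIndex A := by
  haveI : IsMulCommutative A := hA
  haveI : Fact p.Prime := ⟨hp⟩
  -- maximality: any subgroup strictly containing A is ⊤
  have hmax : ∀ H : Subgroup G, A < H → H = ⊤ := by
    intro H hlt
    have hrel : A.relIndex H * H.index = p := by
      rw [Subgroup.relIndex_mul_index hlt.le, hAmax]
    have hdvd : H.index ∣ p := Dvd.intro_left _ hrel
    rcases hp.eq_one_or_self_of_dvd _ hdvd with h1 | h2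
    · exact Subgroup.index_eq_one.mp h1
    · exfalso
      rw [h2] at hrel
      have : A.relIndex H = 1 := by
        have := hp.pos
        nlinarith [hrel]
      exact hlt.ne (le_antisymm hlt.le (Subgroup.relIndex_eq_one.mp this))
  have hAlt : A < ⊤ := lt_top_iff_ne_top.mpr (fun h => hg (h ▸ Subgroup.mem_top g))
  -- A is normal
  haveI hAnormal : A.Normal := by
    haveI : Group.IsNilpotent G := hG.isNilpotent
    have hnc := normalizerCondition_of_isNilpotent (G := G)
    exact Subgroup.normalizer_eq_top_iff.mp (hmax _ (lt_of_le_of_lt (le_of_eq rfl)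
      (hnc A hAlt) |>.trans_le le_rfl) )
  have hconj : ∀ a : G, a ∈ A → g * a * g⁻¹ ∈ A := fun a ha => hAnormal.conj_mem a ha g
  have hconj' : ∀ a : G, a ∈ A → g⁻¹ * a * g ∈ A := by
    intro a ha
    simpa using hAnormal.conj_mem a ha g⁻¹
  have commA : ∀ a b : G, a ∈ A → b ∈ A → a * b = b * a := fun a b ha hb =>
    Subgroup.mul_comm_of_mem_isMulCommutative A ha hb
  -- the homomorphism a ↦ ⁅g, a⁆
  let φ : A →* G :=
    { toFun := fun a => ⁅g, (a : G)⁆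
      map_one' := by simp
      map_mul' := by
        intro a b
        have hu : g * (b : G) * g⁻¹ * (b : G)⁻¹ ∈ A :=
          A.mul_mem (hconj b b.2) (A.inv_mem b.2)
        have h1 : (g * (b : G) * g⁻¹ * (b : G)⁻¹) * (a : G)⁻¹
            = (a : G)⁻¹ * (g * (b : G) * g⁻¹ * (b : G)⁻¹) :=
          commA _ _ hu (A.inv_mem a.2)
        show ⁅g, ((a : G) * b)⁆ = ⁅g, (a : G)⁆ * ⁅g, (b : G)⁆
        simp only [commutatorElement_def, mul_inv_rev]
        calc g * ((a : G) * b) * g⁻¹ * ((b : G)⁻¹ * (a : G)⁻¹)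
            = (g * a * g⁻¹) * ((g * (b : G) * g⁻¹ * (b : G)⁻¹) * (a : G)⁻¹) := by group
          _ = (g * a * g⁻¹) * ((a : G)⁻¹ * (g * (b : G) * g⁻¹ * (b : G)⁻¹)) := by rw [h1]
          _ = g * a * g⁻¹ * (a : G)⁻¹ * (g * (b : G) * g⁻¹ * (b : G)⁻¹) := by group }
  set K : Subgroup G := φ.range with hK
  have hmemK : ∀ a : G, a ∈ A → ⁅g, a⁆ ∈ K := fun a ha => ⟨⟨a, ha⟩, rfl⟩
  have hKA : K ≤ A := by
    rintro x ⟨a, rfl⟩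
    show ⁅g, (a : G)⁆ ∈ A
    rw [commutatorElement_def]
    exact A.mul_mem (hconj _ a.2) (A.inv_mem a.2)
  -- generators
  have hclosure : Subgroup.closure ((A : Set G) ∪ {g}) = ⊤ := by
    apply hmax
    refine lt_of_le_of_ne (fun x hx => Subgroup.subset_closure (Or.inl hx)) ?_
    intro h
    apply hg
    rw [h]
    exact Subgroup.subset_closure (Or.inr rfl)
  -- K is normal
  have hgK : ∀ h : G, h ∈ K ↔ g * h * g⁻¹ ∈ K := by
    intro h
    constructor
    · rintro ⟨a, rfl⟩
      refine ⟨⟨g * (a : G) * g⁻¹, hconj _ a.2⟩, ?_⟩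
      show ⁅g, g * (a : G) * g⁻¹⁆ = g * ⁅g, (a : G)⁆ * g⁻¹
      group
    · rintro ⟨a, ha⟩
      refine ⟨⟨g⁻¹ * (a : G) * g, hconj' _ a.2⟩, ?_⟩
      have : (⁅g, (a : G)⁆ : G) = g * h * g⁻¹ := ha
      have hh : h = g⁻¹ * ⁅g, (a : G)⁆ * g := by rw [this]; group
      show ⁅g, g⁻¹ * (a : G) * g⁆ = h
      rw [hh]; group
  haveI hKnormal : K.Normal := by
    rw [← Subgroup.normalizer_eq_top_iff, ← top_le_iff, ← hclosure]
    rw [Subgroup.closure_le]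
    rintro x (hx | hx)
    · rw [SetLike.mem_coe, Subgroup.mem_normalizer_iff]
      intro h
      constructor
      · intro hh
        have hc := commA x h hx (hKA hh)
        have heq : x * h * x⁻¹ = h := by rw [hc]; group
        rwa [heq]
      · intro hh
        have hhA : h ∈ A := by
          have := A.mul_mem (A.mul_mem (A.inv_mem hx) (hKA hh)) hx
          simpa [mul_assoc] using this
        have hc := commA x h hx hhA
        have heq : x * h * x⁻¹ = h := by rw [hc]; group
        rwa [heq] at hh
    · rw [Set.mem_singleton_iff] at hx
      rw [hx, SetLike.mem_coe, Subgroup.mem_normalizer_iff]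
      exact hgK
  -- quotient is abelian
  have hcomm_quot : ∀ x y : G, ⁅x, y⁆ ∈ K := by
    intro x y
    let Q := G ⧸ K
    let mk : G →* Q := QuotientGroup.mk' K
    have hmk : Function.Surjective mk := QuotientGroup.mk'_surjective K
    set S : Set Q := mk '' ((A : Set G) ∪ {g}) with hS
    have hclosQ : Subgroup.closure S = ⊤ := by
      rw [hS, ← MonoidHom.map_closure, hclosure]
      exact Subgroup.map_top_of_surjective mk hmk
    -- elements of S pairwise commute
    have hpair : ∀ u ∈ (A : Set G) ∪ {g}, ∀ v ∈ (A : Set G) ∪ {g},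
        mk u * mk v = mk v * mk u := by
      intro u hu v hv
      rw [← map_mul, ← map_mul]
      apply (QuotientGroup.eq (s := K)).mpr
      rcases hu with hu | hu <;> rcases hv with hv | hv
      · have : (u * v)⁻¹ * (v * u) = 1 := by
          rw [commA u v hu hv]; group
        rw [this]; exact K.one_mem
      · rw [Set.mem_singleton_iff] at hv
        rw [hv]
        have heq : (u * g)⁻¹ * (g * u) = ⁅g, g⁻¹ * u⁻¹ * g⁆⁻¹ := by
          rw [commutatorElement_def]; group
        rw [heq]
        exact K.inv_mem (hmemK _ (hconj' _ (A.inv_mem hu)))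
      · rw [Set.mem_singleton_iff] at hu
        rw [hu]
        have heq : (g * v)⁻¹ * (v * g) = ⁅g, g⁻¹ * v⁻¹ * g⁆ := by
          rw [commutatorElement_def]; group
        rw [heq]
        exact hmemK _ (hconj' _ (A.inv_mem hv))
      · rw [Set.mem_singleton_iff] at hu hv
        rw [hu, hv]
        have heq : (g * g)⁻¹ * (g * g) = (1 : G) := by group
        rw [heq]
        exact K.one_mem
    have hScent : S ⊆ (Subgroup.centralizer S : Set Q) := by
      rintro s ⟨u, hu, rfl⟩
      rw [SetLike.mem_coe, Subgroup.mem_centralizer_iff]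
      rintro t ⟨v, hv, rfl⟩
      exact hpair v hv u hu
    have hcentTop : Subgroup.centralizer S = ⊤ := by
      rw [← top_le_iff, ← hclosQ]
      exact Subgroup.closure_le _ |>.mpr hScent
    have hScenter : S ⊆ (Subgroup.center Q : Set Q) := by
      intro s hs
      rw [SetLike.mem_coe, Subgroup.mem_center_iff]
      intro q
      have : q ∈ Subgroup.centralizer S := hcentTop ▸ Subgroup.mem_top q
      exact (Subgroup.mem_centralizer_iff.mp this s hs).symm
    have hcenterTop : Subgroup.center Q = ⊤ := by
      rw [← top_le_iff, ← hclosQ]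
      exact Subgroup.closure_le _ |>.mpr hScenter
    have hQcomm : ∀ q r : Q, q * r = r * q := by
      intro q r
      have : q ∈ Subgroup.center Q := hcenterTop ▸ Subgroup.mem_top q
      exact (Subgroup.mem_center_iff.mp this r).symm
    have : mk ⁅x, y⁆ = 1 := by
      rw [map_commutatorElement]
      rw [commutatorElement_eq_one_iff_mul_comm]
      exact hQcomm _ _
    exact (QuotientGroup.eq_one_iff _).mp this
  -- commutator G = K
  have hKcomm : commutator G = K := by
    apply le_antisymm
    · rw [commutator_def, Subgroup.commutator_le]
      intro a _ b _
      exact hcomm_quot a b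
    · rintro x ⟨a, rfl⟩
      exact Subgroup.commutator_mem_commutator (Subgroup.mem_top g) (Subgroup.mem_top (a : G))
  have hsetK : (K : Set G) = {x : G | ∃ a ∈ A, x = ⁅g, a⁆} := by
    ext x
    constructor
    · rintro ⟨a, rfl⟩
      exact ⟨a, a.2, rfl⟩
    · rintro ⟨a, ha, rfl⟩
      exact hmemK a ha
  constructor
  · rw [hKcomm]; exact hsetK
  · rw [hKcomm]
    have hker : φ.ker = (Subgroup.centralizer {g}).subgroupOf A := by
      ext a
      rw [MonoidHom.mem_ker, Subgroup.mem_subgroupOf]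
      show ⁅g, (a : G)⁆ = 1 ↔ _
      rw [commutatorElement_eq_one_iff_mul_comm, Subgroup.mem_centralizer_singleton_iff]
      constructor <;> intro h <;> exact h.symm
    rw [Subgroup.relIndex, ← hker, Subgroup.index_ker φ]
end

section
/- Let G be a nonabelian finite p-group with an abelian maximal subgroup A. Then |G : Z(G)| = p·|G'|. -/
open scoped commutatorElement IsMulCommutative

theorem stmt1 {p : ℕ} (hp : p.Prime) {G : Type} [Group G] [Finite G]
    (hG : IsPGroup p G) (A : Subgroup G) (hA : IsMulCommutative A) (hAmax : A.index = p)
    (hnab : ∃ x y : G, x * y ≠ y * x) :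
    (Subgroup.center G).index = p * Nat.card (commutator G) := by
  haveI := hA
  haveI : Fact p.Prime := ⟨hp⟩
  have hcov : ∀ B : Subgroup G, A ≤ B → B = A ∨ B = ⊤ := by
    intro B hAB
    have hdvd : B.index ∣ p := hAmax ▸ Subgroup.index_dvd_of_le hAB
    rcases hp.eq_one_or_self_of_dvd _ hdvd with h1 | h1
    · right; exact Subgroup.index_eq_one.mp h1
    · left
      have h2 := Subgroup.relIndex_mul_index hAB
      rw [hAmax, h1] at h2
      have h3 : A.relIndex B = 1 :=
        Nat.eq_of_mul_eq_mul_right hp.pos (by rw [h2, one_mul])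
      exact le_antisymm (Subgroup.relIndex_eq_one.mp h3) hAB
  have hAne : A ≠ ⊤ := by
    intro h; rw [h, Subgroup.index_top] at hAmax; exact hp.ne_one hAmax.symm
  haveI hAnormal : A.Normal := by
    haveI hnil : Group.IsNilpotent G := hG.isNilpotent
    exact Subgroup.NormalizerCondition.normal_of_coatom A
      normalizerCondition_of_isNilpotent
      ⟨hAne, fun B hB => (hcov B hB.le).resolve_left (ne_of_gt hB)⟩
  -- decomposition
  have hdec : ∀ (c : G), c ∉ A → ∀ g : G, ∃ a ∈ A, ∃ m : ℤ, g = a * c ^ m := by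
    intro c hc g
    have ht : A ⊔ Subgroup.zpowers c = ⊤ := by
      rcases hcov _ le_sup_left with h | h
      · exact absurd (h ▸ Subgroup.mem_sup_right (Subgroup.mem_zpowers c)) hc
      · exact h
    have hg : g ∈ (↑(A ⊔ Subgroup.zpowers c) : Set G) := by rw [ht]; trivial
    rw [Subgroup.normal_mul] at hg
    obtain ⟨a, ha, w, hw, hgw⟩ := hg
    obtain ⟨m, rfl⟩ := Subgroup.mem_zpowers_iff.mp hw
    exact ⟨a, ha, m, hgw.symm⟩
  -- center is contained in A
  have hZA : Subgroup.center G ≤ A := by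
    intro z hz
    by_contra hzA
    obtain ⟨x, y, hxy⟩ := hnab
    apply hxy
    obtain ⟨a, ha, m, rfl⟩ := hdec z hzA x
    obtain ⟨a', ha', k, rfl⟩ := hdec z hzA y
    have hzc : ∀ g : G, Commute g z := fun g => (Subgroup.mem_center_iff.mp hz g)
    have c1 : Commute a a' := Subgroup.mul_comm_of_mem_isMulCommutative A ha ha'
    exact ((c1.mul_right ((hzc a).zpow_right k)).mul_left
      (((hzc a').symm.zpow_left m).mul_right (Commute.refl z |>.zpow_zpow m k)))
  -- choose b outside A
  have hbe : ∃ b : G, b ∉ A := by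
    by_contra h
    push_neg at h
    exact hAne ((Subgroup.eq_top_iff' A).mpr h)
  obtain ⟨b, hb⟩ := hbe
  -- the commutator-with-b homomorphism
  let σ : A →* A := (MulAut.conjNormal b : MulAut A).toMonoidHom
  let f : A →* A := (MonoidHom.id A) / σ
  have hfval : ∀ a : A, ((f a : A) : G) = ⁅(a : G), b⁆ := by
    intro a
    have h1 : f a = a / σ a := rfl
    rw [h1]
    push_cast
    have h2 : ((σ a : A) : G) = b * a * b⁻¹ := MulAut.conjNormal_apply b a
    rw [h2, commutatorElement_def, div_eq_mul_inv]
    group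
  -- the subgroup K = [A, b] inside G
  set K : Subgroup G := f.range.map A.subtype with hKdef
  have hKA : K ≤ A := by
    rintro x ⟨y, -, rfl⟩
    exact y.2
  have hKmem : ∀ x : G, x ∈ K ↔ ∃ a : A, ⁅(a : G), b⁆ = x := by
    intro x
    constructor
    · rintro ⟨y, ⟨a, rfl⟩, rfl⟩
      exact ⟨a, (hfval a).symm⟩
    · rintro ⟨a, rfl⟩
      exact ⟨f a, ⟨a, rfl⟩, hfval a⟩
  have hKconjb : ∀ x ∈ K, b * x * b⁻¹ ∈ K := by
    intro x hx
    obtain ⟨a, rfl⟩ := (hKmem x).mp hx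
    refine (hKmem _).mpr ⟨⟨b * a * b⁻¹, hAnormal.conj_mem _ a.2 b⟩, ?_⟩
    show ⁅b * (a : G) * b⁻¹, b⁆ = b * ⁅(a : G), b⁆ * b⁻¹
    rw [commutatorElement_def, commutatorElement_def]
    group
  haveI hKnormal : K.Normal := by
    rw [← Subgroup.normalizer_eq_top_iff]
    have hAN : A ≤ Subgroup.normalizer (K : Set G) := by
      intro a' ha'
      rw [Subgroup.mem_normalizer_iff]
      intro h
      constructor
      · intro hh
        have he : a' * h * a'⁻¹ = h := by
          rw [Subgroup.mul_comm_of_mem_isMulCommutative A ha' (hKA hh)]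
          group
        rw [he]; exact hh
      · intro hh
        have hhA : h ∈ A := by
          have h1 := hKA hh
          have h2 : h = a'⁻¹ * (a' * h * a'⁻¹) * a' := by group
          rw [h2]; exact A.mul_mem (A.mul_mem (A.inv_mem ha') h1) ha'
        have he : a' * h * a'⁻¹ = h := by
          rw [Subgroup.mul_comm_of_mem_isMulCommutative A ha' hhA]
          group
        rwa [he] at hh
    have hbN : b ∈ Subgroup.normalizer (K : Set G) := by
      rw [Subgroup.mem_normalizer_iff]
      have hsurj : ∀ x ∈ K, ∃ k ∈ K, b * k * b⁻¹ = x := by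
        intro x hx
        have hinj : Function.Injective
            (fun k : K => (⟨b * k * b⁻¹, hKconjb k k.2⟩ : K)) := by
          intro k k' hkk
          have := congrArg (fun z : K => (z : G)) hkk
          simp only at this
          exact Subtype.ext (mul_left_cancel (mul_right_cancel this))
        obtain ⟨k, hk⟩ := (Finite.injective_iff_surjective.mp hinj) ⟨x, hx⟩
        exact ⟨k, k.2, congrArg (fun z : K => (z : G)) hk⟩
      intro h
      constructor
      · exact fun hh => hKconjb h hh
      · intro hh
        obtain ⟨k, hk, hkeq⟩ := hsurj _ hh
        have : k = h := mul_left_cancel (mul_right_cancel hkeq)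
        rwa [← this]
    rcases hcov (Subgroup.normalizer (K : Set G)) hAN with h | h
    · exact absurd (h ▸ hbN) hb
    · exact h
  -- K is the commutator subgroup
  have hKcomm : K = commutator G := by
    apply le_antisymm
    · intro x hx
      obtain ⟨a, rfl⟩ := (hKmem x).mp hx
      rw [commutator_def]
      exact Subgroup.commutator_mem_commutator (Subgroup.mem_top _) (Subgroup.mem_top _)
    · rw [commutator_def, Subgroup.commutator_le]
      intro g _ h _
      set π : G →* G ⧸ K := QuotientGroup.mk' K with hπ
      have hab : ∀ a : A, Commute (π (a : G)) (π b) := by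
        intro a
        have h1 : π ⁅(a : G), b⁆ = 1 :=
          (QuotientGroup.eq_one_iff _).mpr ((hKmem _).mpr ⟨a, rfl⟩)
        rw [map_commutatorElement] at h1
        exact commutatorElement_eq_one_iff_mul_comm.mp h1
      have haa : ∀ a a' : A, Commute (π (a : G)) (π (a' : G)) := by
        intro a a'
        have h1 : (a : G) * a' = a' * a :=
          Subgroup.mul_comm_of_mem_isMulCommutative A a.2 a'.2
        show π a * π a' = π a' * π a
        rw [← map_mul, ← map_mul, h1]
      suffices h1 : π ⁅g, h⁆ = 1 by
        exact (QuotientGroup.eq_one_iff _).mp h1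
      rw [map_commutatorElement, commutatorElement_eq_one_iff_mul_comm]
      obtain ⟨a₁, ha₁, m, rfl⟩ := hdec b hb g
      obtain ⟨a₂, ha₂, k, rfl⟩ := hdec b hb h
      rw [map_mul, map_mul, map_zpow, map_zpow]
      have c12 : Commute (π a₁) (π a₂) := haa ⟨a₁, ha₁⟩ ⟨a₂, ha₂⟩
      have c1b : Commute (π a₁) (π b) := hab ⟨a₁, ha₁⟩
      have c2b : Commute (π a₂) (π b) := hab ⟨a₂, ha₂⟩
      exact ((c12.mul_right (c1b.zpow_right k)).mul_left
        ((c2b.symm.zpow_left m).mul_right ((Commute.refl (π b)).zpow_zpow m k))).eq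
  -- the kernel of f corresponds to the center
  have hker : f.ker.map A.subtype = Subgroup.center G := by
    ext x
    constructor
    · rintro ⟨a, ha, rfl⟩
      rw [Subgroup.mem_center_iff]
      intro g
      have ha2 : f a = 1 := ha
      have hfa1 : ((f a : A) : G) = 1 := by rw [ha2]; rfl
      rw [hfval] at hfa1
      have hcb : Commute ((a : A) : G) b :=
        commutatorElement_eq_one_iff_mul_comm.mp hfa1
      obtain ⟨a', ha', m, rfl⟩ := hdec b hb g
      have h1 : Commute a' ((a : A) : G) :=
        Subgroup.mul_comm_of_mem_isMulCommutative A ha' a.2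
      exact (h1.mul_left (hcb.symm.zpow_left m)).eq
    · intro hx
      have hxA : x ∈ A := hZA hx
      refine ⟨⟨x, hxA⟩, (f.mem_ker).mpr ?_, rfl⟩
      apply Subtype.ext
      show ((f ⟨x, hxA⟩ : A) : G) = 1
      rw [hfval]
      exact commutatorElement_eq_one_iff_mul_comm.mpr
        (Subgroup.mem_center_iff.mp hx b).symm
  -- cardinality bookkeeping
  have e1 : Nat.card (Subgroup.center G) = Nat.card f.ker := by
    rw [← hker]
    exact (Nat.card_congr
      (Subgroup.equivMapOfInjective f.ker A.subtype A.subtype_injective).toEquiv).symm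
  have e2 : Nat.card (commutator G) = Nat.card f.range := by
    rw [← hKcomm, hKdef]
    exact (Nat.card_congr
      (Subgroup.equivMapOfInjective f.range A.subtype A.subtype_injective).toEquiv).symm
  have e3 : Nat.card A = Nat.card f.range * Nat.card f.ker := by
    rw [← Nat.card_congr (QuotientGroup.quotientKerEquivRange f).toEquiv]
    exact Subgroup.card_eq_card_quotient_mul_card_subgroup f.ker
  have e4 : Nat.card A * p = Nat.card G := by
    rw [← hAmax]; exact Subgroup.card_mul_index A
  have e5 : Nat.card (Subgroup.center G) * (Subgroup.center G).index = Nat.card G :=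
    Subgroup.card_mul_index _
  have hpos : 0 < Nat.card (Subgroup.center G) := Nat.card_pos
  refine Nat.eq_of_mul_eq_mul_left hpos ?_
  rw [e5, ← e4, e3, e1, e2]
  ring
end

section
/- Let G be a finite p-group with an abelian maximal subgroup A, let H be a nonabelian maximal subgroup of G, and let φ : H → G be a homomorphism whose kernel contains no nontrivial subgroup normal in G. Then φ is injective. -/
-- If S ≤ T and they have the same finite index, they are equal.
lemma aux_eq_of_le_of_index_eq {G : Type} [Group G] {S T : Subgroup G} (h : S ≤ T)
    (heq : T.index = S.index) (hne : S.index ≠ 0) : S = T := by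
  have h1 := Subgroup.relIndex_mul_index h
  rw [heq] at h1
  have h2 : S.relIndex T = 1 := mul_right_cancel₀ hne (h1.trans (one_mul S.index).symm)
  exact le_antisymm h (Subgroup.relIndex_eq_one.mp h2)

-- A subgroup of index p in a finite p-group is normal.
lemma aux_normal_of_index_prime {p : ℕ} (hp : p.Prime) {G : Type} [Group G] [Finite G]
    (hG : IsPGroup p G) {S : Subgroup G} (hS : S.index = p) : S.Normal := by
  haveI : Fact p.Prime := ⟨hp⟩
  haveI := hG.isNilpotent
  have hnc := normalizerCondition_of_isNilpotent (G := G)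
  have hlt : S < ⊤ := lt_top_iff_ne_top.mpr (fun h => by
    rw [h, Subgroup.index_top] at hS; exact hp.one_lt.ne' hS.symm)
  have h2 := hnc S hlt
  have hdvd : (Subgroup.normalizer (S : Set G)).index ∣ p := hS ▸ Subgroup.index_dvd_of_le Subgroup.le_normalizer
  rcases hp.eq_one_or_self_of_dvd _ hdvd with h1 | h1
  · exact Subgroup.normalizer_eq_top_iff.mp (Subgroup.index_eq_one.mp h1)
  · exact absurd (aux_eq_of_le_of_index_eq Subgroup.le_normalizer (h1.trans hS.symm)
      (hS ▸ hp.ne_zero)) h2.ne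

theorem stmt3 {p : ℕ} (hp : p.Prime) {G : Type} [Group G] [Finite G]
    (hG : IsPGroup p G) (A : Subgroup G) (hA : IsMulCommutative A) (hAmax : A.index = p)
    (H : Subgroup G) (hHmax : H.index = p) (hHnab : ¬ IsMulCommutative H)
    (φ : H →* G)
    (hker : ∀ K : Subgroup G, K.Normal → K ≤ H → K.subgroupOf H ≤ φ.ker → K = ⊥) :
    Function.Injective φ := by
  haveI : Fact p.Prime := ⟨hp⟩
  haveI := hA
  have hAnormal : A.Normal := aux_normal_of_index_prime hp hG hAmax
  haveI := hAnormal
  have hHnormal : H.Normal := aux_normal_of_index_prime hp hG hHmax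
  rw [← MonoidHom.ker_eq_bot_iff]
  by_contra hN
  have hAneH : A ≠ H := fun h => hHnab (h ▸ hA)
  -- A ⊔ H = ⊤
  have hAH : A ⊔ H = ⊤ := by
    have hdvd : (A ⊔ H).index ∣ p := hAmax ▸ Subgroup.index_dvd_of_le le_sup_left
    rcases hp.eq_one_or_self_of_dvd _ hdvd with h1 | h1
    · exact Subgroup.index_eq_one.mp h1
    · exfalso
      have hA2 : A = A ⊔ H := aux_eq_of_le_of_index_eq le_sup_left
        (h1.trans hAmax.symm) (hAmax ▸ hp.ne_zero)
      have hHle : H ≤ A := hA2 ▸ le_sup_right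
      exact hAneH (aux_eq_of_le_of_index_eq hHle (hAmax.trans hHmax.symm)
        (hHmax ▸ hp.ne_zero)).symm
  -- the candidate normal subgroup
  set K : Subgroup G := (φ.ker.map H.subtype) ⊓ A with hKdef
  have hKA : K ≤ A := inf_le_right
  have hKH : K ≤ H := inf_le_left.trans (Subgroup.map_subtype_le _)
  have key : ∀ S : Subgroup G, (∀ g ∈ S, ∀ x ∈ K, g * x * g⁻¹ ∈ K) → S ≤ Subgroup.normalizer (K : Set G) := by
    intro S hS g hg
    rw [Subgroup.mem_normalizer_iff]
    intro x
    constructor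
    · exact fun hx => hS g hg x hx
    · intro hx
      have h3 := hS g⁻¹ (inv_mem hg) _ hx
      have h4 : g⁻¹ * (g * x * g⁻¹) * g⁻¹⁻¹ = x := by group
      rwa [h4] at h3
  have hKnormal : K.Normal := by
    rw [← Subgroup.normalizer_eq_top_iff, ← top_le_iff, ← hAH, sup_le_iff]
    constructor
    · refine key A (fun a ha x hx => ?_)
      have : a * x * a⁻¹ = x := by
        rw [Subgroup.mul_comm_of_mem_isMulCommutative A ha (hKA hx)]
        group
      rwa [this]
    · refine key H (fun h hh x hx => ?_)
      have hx2 : h * x * h⁻¹ ∈ A := hAnormal.conj_mem x hx.2 h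
      obtain ⟨n, hn, rfl⟩ := hx.1
      refine Subgroup.mem_inf.mpr ⟨?_, hx2⟩
      exact ⟨⟨h, hh⟩ * n * ⟨h, hh⟩⁻¹, (MonoidHom.normal_ker φ).conj_mem n hn ⟨h, hh⟩, rfl⟩
  have hdisj : (φ.ker.map H.subtype) ⊓ A = ⊥ := hker K hKnormal hKH (by
    intro x hx
    rw [Subgroup.mem_subgroupOf] at hx
    obtain ⟨n, hn, hnx⟩ := hx.1
    have : n = x := Subtype.ext hnx
    rwa [← this]
    )
  -- move to H
  set C : Subgroup ↥H := A.subgroupOf H with hCdef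
  have hCnormal : C.Normal := hAnormal.subgroupOf H
  haveI := hCnormal
  have hNC : φ.ker ⊓ C = ⊥ := by
    rw [eq_bot_iff]
    intro x hx
    have h1 : (x : G) ∈ (φ.ker.map H.subtype) ⊓ A :=
      Subgroup.mem_inf.mpr ⟨⟨x, hx.1, rfl⟩, hx.2⟩
    rw [hdisj, Subgroup.mem_bot] at h1
    have : x = 1 := Subtype.ext h1
    simp [this]
  have hCindex : C.index = p := by
    have h1 : A.relIndex (H ⊔ A) = A.relIndex H := Subgroup.relIndex_sup_right H A
    rw [sup_comm, hAH, Subgroup.relIndex_top_right] at h1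
    have h2 : C.index = A.relIndex H := rfl
    rw [h2, ← h1, hAmax]
  have hHp : IsPGroup p ↥H := hG.to_subgroup H
  -- card of the kernel is p
  have hcard : Nat.card φ.ker = p := by
    obtain ⟨k, hk⟩ := IsPGroup.iff_card.mp (hHp.to_subgroup φ.ker)
    have hk1 : 1 < Nat.card φ.ker := φ.ker.one_lt_card_iff_ne_bot.mpr hN
    have hle : Nat.card φ.ker ≤ p := by
      have hf : Function.Injective (fun n : ↥φ.ker => ((n : ↥H) : ↥H ⧸ C)) := by
        intro a b hab
        have h2 : ((a : ↥H))⁻¹ * (b : ↥H) ∈ C := QuotientGroup.eq.mp hab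
        have h3 : ((a : ↥H))⁻¹ * (b : ↥H) ∈ φ.ker ⊓ C :=
          Subgroup.mem_inf.mpr ⟨mul_mem (inv_mem a.2) b.2, h2⟩
        rw [hNC, Subgroup.mem_bot] at h3
        exact Subtype.ext (inv_mul_eq_one.mp h3)
      have := Nat.card_le_card_of_injective _ hf
      rwa [show Nat.card (↥H ⧸ C) = C.index from rfl, hCindex] at this
    rw [hk] at hk1 hle ⊢
    have hk0 : k ≠ 0 := by rintro rfl; simp at hk1
    have : k ≤ 1 := (Nat.pow_le_pow_iff_right hp.one_lt).mp (by rwa [pow_one])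
    rw [show k = 1 from le_antisymm this (Nat.one_le_iff_ne_zero.mpr hk0), pow_one]
  -- the kernel is central in H
  letI : MulAction ↥H ↥φ.ker :=
    { smul := fun h n => ⟨h * (n : ↥H) * h⁻¹, (MonoidHom.normal_ker φ).conj_mem (n : ↥H) n.2 h⟩
      one_smul := fun n => Subtype.ext (by show (1 : ↥H) * (n : ↥H) * (1 : ↥H)⁻¹ = (n : ↥H); group)
      mul_smul := fun g h n => Subtype.ext
        (by show (g * h) * (n : ↥H) * (g * h)⁻¹ = g * (h * (n : ↥H) * h⁻¹) * g⁻¹; group) }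
  have hfix1 : (1 : ↥φ.ker) ∈ MulAction.fixedPoints ↥H ↥φ.ker := by
    intro h
    exact Subtype.ext (by show h * ((1 : ↥φ.ker) : ↥H) * h⁻¹ = ((1 : ↥φ.ker) : ↥H); simp)
  obtain ⟨b, hbfix, hb1⟩ := hHp.exists_fixed_point_of_prime_dvd_card_of_fixed_point
    (α := ↥φ.ker) (hcard ▸ dvd_refl p) hfix1
  have hbc : (↑b : ↥H) ∈ Subgroup.center ↥H := by
    rw [Subgroup.mem_center_iff]
    intro g
    have h1 : g * ↑b * g⁻¹ = (↑b : ↥H) := congrArg Subtype.val (hbfix g)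
    calc g * ↑b = g * ↑b * g⁻¹ * g := by group
    _ = ↑b * g := by rw [h1]
  have hbne : (↑b : ↥H) ≠ 1 := fun h => hb1 (Subtype.ext h).symm
  have hkercen : φ.ker ≤ Subgroup.center ↥H := by
    have hzle : Subgroup.zpowers (↑b : ↥H) ≤ φ.ker := Subgroup.zpowers_le.mpr b.2
    have hord : orderOf (↑b : ↥H) = p := by
      have hdvd : orderOf b ∣ p := hcard ▸ orderOf_dvd_natCard b
      have heq : orderOf (↑b : ↥H) = orderOf b :=
        orderOf_injective φ.ker.subtype φ.ker.subtype_injective b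
      rcases hp.eq_one_or_self_of_dvd _ hdvd with h1 | h1
      · exact absurd (orderOf_eq_one_iff.mp (heq.trans h1)) hbne
      · exact heq.trans h1
    have hzcard : Nat.card (Subgroup.zpowers (↑b : ↥H)) = p := by
      rw [Nat.card_zpowers, hord]
    have heq : Subgroup.zpowers (↑b : ↥H) = φ.ker :=
      Subgroup.eq_of_le_of_card_ge hzle (by rw [hzcard, hcard])
    rw [← heq]
    exact Subgroup.zpowers_le.mpr hbc
  -- ker ⊔ C = ⊤
  have htop : φ.ker ⊔ C = ⊤ := by
    have hdvd : (φ.ker ⊔ C).index ∣ p := hCindex ▸ Subgroup.index_dvd_of_le le_sup_right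
    rcases hp.eq_one_or_self_of_dvd _ hdvd with h1 | h1
    · exact Subgroup.index_eq_one.mp h1
    · exfalso
      have hC2 : C = φ.ker ⊔ C := aux_eq_of_le_of_index_eq le_sup_right
        (h1.trans hCindex.symm) (hCindex ▸ hp.ne_zero)
      have hle : φ.ker ≤ C := hC2 ▸ le_sup_left
      refine hN (eq_bot_iff.mpr fun x hx => ?_)
      rw [← hNC]
      exact Subgroup.mem_inf.mpr ⟨hx, hle hx⟩
  -- conclude H commutative, contradiction
  refine hHnab ⟨⟨fun x y => ?_⟩⟩
  have hx : (x : ↥H) ∈ ((φ.ker ⊔ C : Subgroup ↥H) : Set ↥H) := htop ▸ Subgroup.mem_top x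
  have hy : (y : ↥H) ∈ ((φ.ker ⊔ C : Subgroup ↥H) : Set ↥H) := htop ▸ Subgroup.mem_top y
  rw [Subgroup.normal_mul] at hx hy
  obtain ⟨n, hn, c, hc, rfl⟩ := hx
  obtain ⟨n', hn', c', hc', rfl⟩ := hy
  have zn : ∀ g : ↥H, g * n = n * g := Subgroup.mem_center_iff.mp (hkercen hn)
  have zn' : ∀ g : ↥H, g * n' = n' * g := Subgroup.mem_center_iff.mp (hkercen hn')
  have h1 : Commute n (n' * c') := (zn (n' * c')).symm
  have h2 : Commute c (n' * c') :=
    Commute.mul_right (zn' c) (Subgroup.mul_comm_of_mem_isMulCommutative C hc hc')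
  exact Commute.mul_left h1 h2
end

section
/- Let G be a finite p-group with an abelian maximal subgroup, let H be a maximal subgroup of G, and let φ : H → G be a simple virtual endomorphism (the only φ-invariant subgroup of H normal in G is trivial). Then H is abelian. -/
/-- A virtual endomorphism `φ : H → G` is *simple* if the only subgroup of `H`
which is normal in `G` and `φ`-invariant is the trivial subgroup. -/
def IsSimpleVirtualEndo {G : Type*} [Group G] (H : Subgroup G) (φ : H →* G) : Prop :=
  ∀ K : Subgroup G, K ≤ H → K.Normal → Subgroup.map φ (K.subgroupOf H) ≤ K → K = ⊥

open scoped commutatorElement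

section Aux

open Pointwise

variable {G : Type*} [Group G]

lemma isCoatom_of_index_prime {p : ℕ} (hp : p.Prime) {H : Subgroup G} (hH : H.index = p) :
    IsCoatom H := by
  constructor
  · rintro rfl
    rw [Subgroup.index_top] at hH
    exact hp.ne_one hH.symm
  · intro K hK
    have h1 : H.relIndex K * K.index = H.index := Subgroup.relIndex_mul_index hK.le
    rw [hH] at h1
    rcases hp.eq_one_or_self_of_dvd K.index ⟨_, by rw [← h1, mul_comm]⟩ with h | h
    · exact Subgroup.index_eq_one.mp h
    · exfalso
      rw [h] at h1
      have h2 : H.relIndex K = 1 := by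
        have h3 : H.relIndex K * p = 1 * p := by rw [h1, one_mul]
        exact Nat.eq_of_mul_eq_mul_right hp.pos h3
      exact hK.not_ge (Subgroup.relIndex_eq_one.mp h2)

lemma sup_zpowers_of_coatom {M : Subgroup G} (hM : IsCoatom M) {c : G} (hc : c ∉ M) :
    M ⊔ Subgroup.zpowers c = ⊤ := by
  refine hM.2 _ (lt_of_le_of_ne le_sup_left fun h => hc ?_)
  rw [h]
  exact Subgroup.mem_sup_right (Subgroup.mem_zpowers c)

lemma decomp_of_coatom {M : Subgroup G} (hMn : M.Normal) (hM : IsCoatom M) {c : G}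
    (hc : c ∉ M) (g : G) : ∃ m ∈ M, ∃ k : ℤ, g = m * c ^ k := by
  have hg : g ∈ (M : Set G) * (Subgroup.zpowers c : Set G) := by
    rw [← Subgroup.normal_mul, sup_zpowers_of_coatom hM hc]
    exact Subgroup.mem_top g
  obtain ⟨m, hm, z, hz, rfl⟩ := hg
  obtain ⟨k, rfl⟩ := hz
  exact ⟨m, hm, k, rfl⟩

lemma conj_mul_center {z : G} (hz : z ∈ Subgroup.center G) (a b : G) :
    a * z * b * (a * z)⁻¹ = a * b * a⁻¹ := by
  have h := Subgroup.mem_center_iff.mp hz b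
  have h2 : z * b * z⁻¹ = b := by rw [← h]; simp
  calc a * z * b * (a * z)⁻¹ = a * (z * b * z⁻¹) * a⁻¹ := by
        simp [mul_inv_rev, mul_assoc]
    _ = a * b * a⁻¹ := by rw [h2]

lemma commutator_mul_center_left {z : G} (hz : z ∈ Subgroup.center G) (a b : G) :
    ⁅a * z, b⁆ = ⁅a, b⁆ := by
  rw [commutatorElement_def, commutatorElement_def, conj_mul_center hz]

lemma commutator_mul_center_right {z : G} (hz : z ∈ Subgroup.center G) (a b : G) :
    ⁅a, b * z⁆ = ⁅a, b⁆ := by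
  rw [← commutatorElement_inv (b * z) a, commutator_mul_center_left hz, commutatorElement_inv]

end Aux

theorem stmt4 {p : ℕ} (hp : p.Prime) {G : Type} [Group G] [Finite G]
    (hG : IsPGroup p G) (A : Subgroup G) (hA : IsMulCommutative A) (hAmax : A.index = p)
    (H : Subgroup G) (hHmax : H.index = p)
    (φ : H →* G) (hφ : IsSimpleVirtualEndo H φ) :
    IsMulCommutative H := by
  haveI : Fact p.Prime := ⟨hp⟩
  haveI hnil : Group.IsNilpotent G := hG.isNilpotent
  have hnormal := ((isNilpotent_of_finite_tfae (G := G)).out 0 2).mp hnil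
  have hcoA : IsCoatom A := isCoatom_of_index_prime hp hAmax
  have hcoH : IsCoatom H := isCoatom_of_index_prime hp hHmax
  haveI hAn : A.Normal := hnormal A hcoA
  haveI hHn : H.Normal := hnormal H hcoH
  haveI := hA
  -- final step: if ⁅R,R⁆ ≤ ⁅H,H⁆ then H is commutative
  have final : ⁅φ.range, φ.range⁆ ≤ ⁅H, H⁆ → IsMulCommutative H := by
    intro hRR
    have h1 : ⁅H, H⁆ ≤ H := Subgroup.commutator_le_left H H
    have h3 : Subgroup.map φ ((⁅H, H⁆).subgroupOf H) ≤ ⁅H, H⁆ := by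
      have e1 : ⁅H, H⁆ = Subgroup.map H.subtype ⁅(⊤ : Subgroup ↥H), ⊤⁆ := by
        rw [Subgroup.map_commutator, ← MonoidHom.range_eq_map, Subgroup.range_subtype]
      have e2 : (⁅H, H⁆).subgroupOf H = ⁅(⊤ : Subgroup ↥H), ⊤⁆ := by
        rw [e1]
        exact Subgroup.comap_map_eq_self_of_injective H.subtype_injective _
      rw [e2, Subgroup.map_commutator, ← MonoidHom.range_eq_map]
      exact hRR
    have h4 := hφ ⁅H, H⁆ h1 inferInstance h3
    exact Subgroup.le_centralizer_iff_isMulCommutative.mp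
      (Subgroup.commutator_eq_bot_iff_le_centralizer.mp h4)
  by_cases hRab : ∀ x ∈ φ.range, ∀ y ∈ φ.range, x * y = y * x
  · apply final
    have hbot : ⁅φ.range, φ.range⁆ = ⊥ := by
      rw [Subgroup.commutator_eq_bot_iff_le_centralizer]
      intro x hx
      rw [Subgroup.mem_centralizer_iff]
      intro y hy
      exact hRab y hy x hx
    rw [hbot]
    exact bot_le
  · push_neg at hRab
    obtain ⟨x, hx, y, hy, hxy⟩ := hRab
    -- the centralizer of any element outside A is commutative
    have hcentab : ∀ {c : G}, c ∉ A → ∀ u ∈ Subgroup.centralizer {c},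
        ∀ v ∈ Subgroup.centralizer {c}, u * v = v * u := by
      intro c hc u hu v hv
      have hcc : c ∈ Subgroup.centralizer {c} := by
        rw [Subgroup.mem_centralizer_iff]
        rintro h rfl
        rfl
      obtain ⟨a, ha, k, rfl⟩ := decomp_of_coatom hAn hcoA hc u
      obtain ⟨b, hb, l, rfl⟩ := decomp_of_coatom hAn hcoA hc v
      have hck : ∀ m : ℤ, c ^ m ∈ Subgroup.centralizer {c} := fun m =>
        Subgroup.zpow_mem _ hcc m
      have ha' : a ∈ Subgroup.centralizer {c} := by
        have := mul_mem hu (inv_mem (hck k))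
        simpa using this
      have hb' : b ∈ Subgroup.centralizer {c} := by
        have := mul_mem hv (inv_mem (hck l))
        simpa using this
      have hac : Commute a c := (Subgroup.mem_centralizer_iff.mp ha' c rfl).symm
      have hbc : Commute b c := (Subgroup.mem_centralizer_iff.mp hb' c rfl).symm
      have hab : Commute a b := Subgroup.mul_comm_of_mem_isMulCommutative A ha hb
      have c1 : Commute a (b * c ^ l) := hab.mul_right (hac.zpow_right l)
      have c2 : Commute (c ^ k) (b * c ^ l) :=
        (hbc.symm.zpow_left k).mul_right ((Commute.refl c).zpow_zpow k l)
      exact c1.mul_left c2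
    -- R is not contained in A
    have hRnA : ¬ φ.range ≤ A := fun h =>
      hxy (Subgroup.mul_comm_of_mem_isMulCommutative A (h hx) (h hy))
    obtain ⟨r, hr, hrA⟩ := SetLike.not_le_iff_exists.mp hRnA
    -- Z(R) ≤ A
    have hZRA : φ.range ⊓ Subgroup.centralizer (φ.range : Set G) ≤ A := by
      intro c hc
      by_contra hcA
      refine hxy (hcentab hcA x ?_ y ?_)
      · rw [Subgroup.mem_centralizer_iff]
        rintro g rfl
        exact (Subgroup.mem_centralizer_iff.mp hc.2 x hx).symm
      · rw [Subgroup.mem_centralizer_iff]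
        rintro g rfl
        exact (Subgroup.mem_centralizer_iff.mp hc.2 y hy).symm
    -- Z(R) ≤ Z(G)
    have hZRZ : φ.range ⊓ Subgroup.centralizer (φ.range : Set G) ≤ Subgroup.center G := by
      intro w hw
      rw [Subgroup.mem_center_iff]
      intro g
      obtain ⟨a, ha, k, rfl⟩ := decomp_of_coatom hAn hcoA hrA g
      have h1 : Commute w a := Subgroup.mul_comm_of_mem_isMulCommutative A (hZRA hw) ha
      have h2 : Commute w r := (Subgroup.mem_centralizer_iff.mp hw.2 r hr).symm
      exact (h1.mul_right (h2.zpow_right k)).symm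
    by_cases hZH : Subgroup.center G ≤ H
    · -- K := C_G(H) ⊓ H is φ-invariant, so trivial; hence the center is trivial
      set K := Subgroup.centralizer (H : Set G) ⊓ H with hKdef
      have hKle : K ≤ H := inf_le_right
      have hKn : K.Normal := by
        constructor
        intro k hk g
        rw [hKdef, Subgroup.mem_inf] at hk ⊢
        obtain ⟨hk1, hk2⟩ := hk
        refine ⟨?_, hHn.conj_mem k hk2 g⟩
        rw [Subgroup.mem_centralizer_iff]
        intro h hh
        have h5 : g⁻¹ * h * g ∈ H := by
          have := hHn.conj_mem h hh g⁻¹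
          simpa using this
        have h6 := Subgroup.mem_centralizer_iff.mp hk1 _ h5
        calc h * (g * k * g⁻¹) = g * (g⁻¹ * h * g * k) * g⁻¹ := by group
          _ = g * (k * (g⁻¹ * h * g)) * g⁻¹ := by rw [h6]
          _ = g * k * g⁻¹ * h := by group
      have hKinv : Subgroup.map φ (K.subgroupOf H) ≤ K := by
        rintro _ ⟨u, hu, rfl⟩
        have hu' : (↑u : G) ∈ K := hu
        rw [hKdef, Subgroup.mem_inf] at hu'
        have huC : (↑u : G) ∈ Subgroup.centralizer (H : Set G) := hu'.1
        have hphiu : φ u ∈ φ.range ⊓ Subgroup.centralizer (φ.range : Set G) := by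
          refine ⟨⟨u, rfl⟩, Subgroup.mem_centralizer_iff.mpr ?_⟩
          rintro _ ⟨v, rfl⟩
          have hvu : (↑v : G) * ↑u = ↑u * ↑v :=
            Subgroup.mem_centralizer_iff.mp huC ↑v v.2
          have hvu' : (v * u : ↥H) = u * v := Subtype.ext hvu
          calc φ v * φ u = φ (v * u) := (map_mul φ v u).symm
            _ = φ (u * v) := by rw [hvu']
            _ = φ u * φ v := map_mul φ u v
        have hz : φ u ∈ Subgroup.center G := hZRZ hphiu
        exact ⟨Subgroup.center_le_centralizer (H : Set G) hz, hZH hz⟩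
      have hKbot := hφ K hKle hKn hKinv
      have hZbot : Subgroup.center G = ⊥ := by
        have hle : Subgroup.center G ≤ K :=
          le_inf (Subgroup.center_le_centralizer _) hZH
        rw [hKbot] at hle
        exact le_bot_iff.mp hle
      rcases subsingleton_or_nontrivial G with hs | hs
      · exact ⟨⟨fun a b => Subtype.ext (Subsingleton.elim _ _)⟩⟩
      · exfalso
        have hnt := hG.center_nontrivial
        rw [hZbot] at hnt
        obtain ⟨a, b, hab⟩ := hnt
        exact hab (Subtype.ext (by
          have ha : (↑a : G) ∈ (⊥ : Subgroup G) := a.2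
          have hb : (↑b : G) ∈ (⊥ : Subgroup G) := b.2
          rw [Subgroup.mem_bot] at ha hb
          rw [ha, hb]))
    · -- center not contained in H: then G = H * Z(G) and ⁅⊤,⊤⁆ = ⁅H,H⁆
      obtain ⟨z, hzZ, hzH⟩ := SetLike.not_le_iff_exists.mp hZH
      apply final
      have hcollapse : ⁅(⊤ : Subgroup G), ⊤⁆ ≤ ⁅H, H⁆ := by
        rw [Subgroup.commutator_le]
        intro g1 _ g2 _
        obtain ⟨h1, hh1, k, rfl⟩ := decomp_of_coatom hHn hcoH hzH g1
        obtain ⟨h2, hh2, l, rfl⟩ := decomp_of_coatom hHn hcoH hzH g2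
        have e : ⁅h1 * z ^ k, h2 * z ^ l⁆ = ⁅h1, h2⁆ := by
          rw [commutator_mul_center_left (Subgroup.zpow_mem _ hzZ k),
            commutator_mul_center_right (Subgroup.zpow_mem _ hzZ l)]
        rw [e]
        exact Subgroup.commutator_mem_commutator hh1 hh2
      exact le_trans (Subgroup.commutator_mono le_top le_top) hcollapse
end

section
/- Let G be a finite p-group of maximal class of order p^n ≥ p^4, and let K ≤ G be a subgroup of order p^{n−t} containing a uniform element s. Then K = ⟨s, γ_{t+1}(G)⟩. -/
open Subgroup Pointwise commutatorElement

section Helpers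
variable {G : Type} [Group G] [Finite G]

/-- Generic fiber-counting: if the fibers of `f : H → X` are contained in cosets of `D`,
then `|H| ≤ |X| * |D|`. -/
lemma fiber_card (H D : Subgroup G) {X : Type} [Finite X]
    (f : H → X) (hf : ∀ a b : H, f a = f b → (b : G)⁻¹ * (a : G) ∈ D) :
    Nat.card H ≤ Nat.card X * Nat.card D := by
  classical
  have : Nonempty H := ⟨1⟩
  set σ : X → H := fun x => if h : ∃ a : H, f a = x then h.choose else 1 with hσ
  have hσs : ∀ a : H, f (σ (f a)) = f a := by
    intro a
    have h : ∃ b : H, f b = f a := ⟨a, rfl⟩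
    simp only [hσ, dif_pos h]
    exact h.choose_spec
  have hinj : Function.Injective
      (fun a : H => ((f a, ⟨(σ (f a) : G)⁻¹ * a, hf a (σ (f a)) (hσs a).symm⟩) : X × D)) := by
    intro a b hab
    simp only [Prod.mk.injEq, Subtype.mk.injEq] at hab
    obtain ⟨h1, h2⟩ := hab
    rw [h1] at h2
    exact Subtype.ext (mul_left_cancel h2)
  calc Nat.card H ≤ Nat.card (X × D) := Nat.card_le_card_of_injective _ hinj
    _ = Nat.card X * Nat.card D := Nat.card_prod _ _

/-- Product formula inequality. -/
lemma card_mul_le_sup_inf (H N : Subgroup G) :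
    Nat.card H * Nat.card N ≤
      Nat.card (H ⊔ N : Subgroup G) * Nat.card (H ⊓ N : Subgroup G) := by
  classical
  have hmem : ∀ q : H × N, (q.1 : G) * q.2 ∈ (H ⊔ N : Subgroup G) := fun q =>
    mul_mem ((le_sup_left : H ≤ H ⊔ N) q.1.2) ((le_sup_right : N ≤ H ⊔ N) q.2.2)
  let f : H × N → (H ⊔ N : Subgroup G) := fun q => ⟨q.1 * q.2, hmem q⟩
  let σ : (H ⊔ N : Subgroup G) → H × N := fun x => if h : ∃ q, f q = x then h.choose else ⟨1, 1⟩
  have hσs : ∀ q, f (σ (f q)) = f q := by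
    intro q
    have h : ∃ q', f q' = f q := ⟨q, rfl⟩
    simp only [σ, dif_pos h]
    exact h.choose_spec
  have hcoe : ∀ q : H × N, ((σ (f q)).1 : G) * (σ (f q)).2 = q.1 * q.2 := fun q =>
    congrArg Subtype.val (hσs q)
  have key : ∀ q : H × N, ((σ (f q)).1 : G)⁻¹ * q.1 ∈ H ⊓ N := by
    intro q
    refine mem_inf.mpr ⟨mul_mem (inv_mem (σ (f q)).1.2) q.1.2, ?_⟩
    have e : ((σ (f q)).1 : G)⁻¹ * q.1 = (σ (f q)).2 * (q.2 : G)⁻¹ := by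
      refine mul_left_cancel (a := ((σ (f q)).1 : G)) ?_
      rw [mul_inv_cancel_left, ← mul_assoc, hcoe q, mul_inv_cancel_right]
    rw [e]
    exact mul_mem (σ (f q)).2.2 (inv_mem q.2.2)
  have hinj : Function.Injective
      (fun q : H × N =>
        ((f q, ⟨_, key q⟩) : (H ⊔ N : Subgroup G) × (H ⊓ N : Subgroup G))) := by
    intro a b hab
    simp only [Prod.mk.injEq, Subtype.mk.injEq] at hab
    obtain ⟨h1, h2⟩ := hab
    rw [h1] at h2
    have e1 : (a.1 : G) = b.1 := mul_left_cancel (by rw [h2])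
    have e2 : (a.1 : G) * a.2 = b.1 * b.2 := congrArg Subtype.val h1
    rw [e1] at e2
    have e3 : (a.2 : G) = b.2 := mul_left_cancel e2
    exact Prod.ext (Subtype.ext e1) (Subtype.ext e3)
  calc Nat.card H * Nat.card N = Nat.card (H × N) := (Nat.card_prod _ _).symm
    _ ≤ Nat.card ((H ⊔ N : Subgroup G) × (H ⊓ N : Subgroup G)) :=
        Nat.card_le_card_of_injective _ hinj
    _ = _ := Nat.card_prod _ _
end Helpers

section Main

variable {G : Type} [Group G] [Finite G]

local notation "γ" => Subgroup.lowerCentralSeries (⊤ : Subgroup G)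

lemma lcs_succ (n : ℕ) : γ (n+1) = ⁅γ n, (⊤ : Subgroup G)⁆ := rfl

lemma stab (i : ℕ) (h : γ i = γ (i+1)) : ∀ k, γ (i+k) = γ i := by
  intro k
  induction k with
  | zero => rfl
  | succ k ih =>
      have : γ (i+k+1) = ⁅γ (i+k), (⊤ : Subgroup G)⁆ := lcs_succ (i+k)
      rw [show i + (k+1) = i+k+1 from rfl, this, ih, ← lcs_succ i, ← h]

lemma strict {m : ℕ} (hbot : γ (m+3) = ⊥) (hnbot : γ (m+2) ≠ ⊥) :
    ∀ i ≤ m+2, ¬ (γ i ≤ γ (i+1)) := by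
  intro i hi hle
  have heq : γ i = γ (i+1) :=
    le_antisymm hle ((Subgroup.lowerCentralSeries_antitone ⊤) (Nat.le_succ i))
  have h1 : γ (i + (m+3-i)) = γ i := stab i heq (m+3-i)
  rw [show i + (m+3-i) = m+3 by omega, hbot] at h1
  have h2 : γ (m+2) ≤ γ i := (Subgroup.lowerCentralSeries_antitone ⊤) (by omega)
  rw [← h1] at h2
  exact hnbot (le_bot_iff.mp h2)

lemma ppow {p m : ℕ} (hp : p.Prime) (hcard : Nat.card G = p ^ (m+4)) (H : Subgroup G) :
    ∃ k ≤ m+4, Nat.card H = p ^ k := by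
  have h : Nat.card H ∣ p ^ (m+4) := hcard ▸ Subgroup.card_subgroup_dvd_card H
  exact (Nat.dvd_prime_pow hp).mp h

lemma growp {p m : ℕ} (hp : p.Prime) (hcard : Nat.card G = p ^ (m+4))
    (H A : Subgroup G) (hle : H ≤ A) (hne : ¬ A ≤ H) :
    p * Nat.card H ≤ Nat.card A := by
  obtain ⟨a, _, ha⟩ := ppow hp hcard H
  obtain ⟨b, _, hb⟩ := ppow hp hcard A
  have hdvd : Nat.card H ∣ Nat.card A := Subgroup.card_dvd_of_le hle
  have hab : a ≤ b := by
    have := Nat.le_of_dvd (Nat.pow_pos hp.pos) (ha ▸ hb ▸ hdvd)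
    exact (Nat.pow_le_pow_iff_right hp.one_lt).mp this
  have hneq : a ≠ b := by
    intro h
    subst h
    exact hne (Subgroup.eq_of_le_of_card_ge hle (le_of_eq (hb.trans ha.symm))).ge
  have : a + 1 ≤ b := by omega
  calc p * Nat.card H = p ^ (a+1) := by rw [ha, pow_succ, mul_comm]
    _ ≤ p ^ b := Nat.pow_le_pow_right hp.pos this
    _ = Nat.card A := hb.symm

lemma comm_central {Q : Type} [Group Q] {a b u v : Q}
    (hu : u ∈ Subgroup.center Q) (hv : v ∈ Subgroup.center Q) :
    ⁅a*u, b*v⁆ = ⁅a, b⁆ := by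
  have e1 : ⁅u, b*v⁆ = 1 := commutatorElement_eq_one_iff_commute.mpr
    ((Subgroup.mem_center_iff.mp hu (b*v)).symm)
  have e2 : ⁅a, v⁆ = 1 := commutatorElement_eq_one_iff_commute.mpr
    (Subgroup.mem_center_iff.mp hv a)
  calc ⁅a*u, b*v⁆ = (a * ⁅u, b*v⁆ * a⁻¹) * ⁅a, b*v⁆ := by group
    _ = ⁅a, b*v⁆ := by rw [e1]; group
    _ = ⁅a, b⁆ * (b * ⁅a, v⁆ * b⁻¹) := by group
    _ = ⁅a, b⁆ := by rw [e2]; group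

lemma central_img (a : G) (ha : a ∈ γ 1) :
    (QuotientGroup.mk' (γ 2)) a ∈ Subgroup.center (G ⧸ γ 2) := by
  rw [Subgroup.mem_center_iff]
  intro q
  obtain ⟨w, rfl⟩ := QuotientGroup.mk'_surjective (γ 2) q
  rw [← map_mul, ← map_mul, QuotientGroup.mk'_apply, QuotientGroup.mk'_apply,
    QuotientGroup.eq]
  have : (w * a)⁻¹ * (a * w) = ⁅a⁻¹, w⁻¹⁆ := by group
  rw [this, lcs_succ 1]
  exact Subgroup.commutator_mem_commutator (inv_mem ha) (Subgroup.mem_top _)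

lemma lem_comm (a b u v : G) (hab : ⁅a, b⁆ ∈ γ 2) (hu : u ∈ γ 1) (hv : v ∈ γ 1) :
    ⁅a*u, b*v⁆ ∈ γ 2 := by
  have h : (QuotientGroup.mk' (γ 2)) ⁅a*u, b*v⁆ = 1 := by
    rw [map_commutatorElement, map_mul, map_mul,
      comm_central (central_img u hu) (central_img v hv), ← map_commutatorElement]
    exact (QuotientGroup.eq_one_iff _).mpr hab
  exact (QuotientGroup.eq_one_iff _).mp h

lemma card_γ1_le {p m : ℕ} (hp : p.Prime) (hcard : Nat.card G = p ^ (m+4))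
    (hbot : γ (m+3) = ⊥) (hnbot : γ (m+2) ≠ ⊥) :
    Nat.card (γ 1) ≤ p ^ (m+2) := by
  by_contra hcon
  obtain ⟨c, hcle, hc⟩ := ppow hp hcard (γ 1)
  have hc3 : m + 3 ≤ c := by
    by_contra h
    exact hcon (hc ▸ Nat.pow_le_pow_right hp.pos (by omega))
  rcases Nat.lt_or_ge c (m+4) with h4 | h4
  · -- c = m+3 : quotient is cyclic of order p
    have hc' : c = m + 3 := by omega
    subst hc'
    haveI := Fact.mk hp
    have hidx : (γ 1).index = p := by
      have h1 : Nat.card (γ 1) * (γ 1).index = Nat.card G := Subgroup.card_mul_index (γ 1)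
      rw [hc, hcard] at h1
      have : p ^ (m+3) * (γ 1).index = p ^ (m+3) * p := by rw [h1, pow_succ]
      exact Nat.eq_of_mul_eq_mul_left (Nat.pow_pos hp.pos) this
    have hcyc : IsCyclic (G ⧸ γ 1) := by
      apply isCyclic_of_prime_card (p := p)
      rw [← Subgroup.index_eq_card, hidx]
    obtain ⟨ξ, hξ⟩ := hcyc.exists_generator
    obtain ⟨x, hx⟩ := QuotientGroup.mk'_surjective (γ 1) ξ
    have hdec : ∀ g : G, ∃ (k : ℤ) (u : G), u ∈ γ 1 ∧ g = x ^ k * u := by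
      intro g
      obtain ⟨k, hk⟩ := Subgroup.mem_zpowers_iff.mp (hξ ((QuotientGroup.mk' (γ 1)) g))
      refine ⟨k, (x ^ k)⁻¹ * g, ?_, by group⟩
      have : ((x ^ k : G) : G ⧸ γ 1) = (g : G ⧸ γ 1) := by
        show (QuotientGroup.mk' (γ 1)) (x ^ k) = (QuotientGroup.mk' (γ 1)) g
        rw [map_zpow, hx, hk]
      exact QuotientGroup.eq.mp this
    have hle : γ 1 ≤ γ 2 := by
      have h1 : γ 1 = ⁅(⊤ : Subgroup G), ⊤⁆ := by
        rw [lcs_succ 0, Subgroup.lowerCentralSeries_zero]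
      rw [h1, Subgroup.commutator_le]
      intro g _ h _
      obtain ⟨k, u, hu, rfl⟩ := hdec g
      obtain ⟨l, v, hv, rfl⟩ := hdec h
      apply lem_comm _ _ _ _ _ hu hv
      have : ⁅x ^ k, x ^ l⁆ = 1 :=
        commutatorElement_eq_one_iff_commute.mpr ((Commute.refl x).zpow_zpow k l)
      rw [this]; exact one_mem _
    exact strict hbot hnbot 1 (by omega) hle
  · -- c = m+4 : γ 1 = ⊤, so the series is constant and ⊤ = ⊥
    have hc' : c = m + 4 := by omega
    subst hc'
    have htop : γ 1 = ⊤ := Subgroup.eq_top_of_card_eq _ (by rw [hc, hcard])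
    have heq : γ 0 = γ 1 := by rw [Subgroup.lowerCentralSeries_zero, htop]
    have h1 : γ (0 + (m+3)) = γ 0 := stab 0 heq (m+3)
    rw [show 0 + (m+3) = m+3 by omega, hbot, Subgroup.lowerCentralSeries_zero] at h1
    have : Nat.card G = 1 := by
      rw [← Subgroup.card_top (G := G), ← h1, Subgroup.card_bot]
    rw [hcard] at this
    have h5 : 1 < p ^ (m+4) := Nat.one_lt_pow (by omega) hp.one_lt
    omega

lemma cardγ {p m : ℕ} (hp : p.Prime) (hcard : Nat.card G = p ^ (m+4))
    (hbot : γ (m+3) = ⊥) (hnbot : γ (m+2) ≠ ⊥) :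
    ∀ i, 1 ≤ i → i ≤ m+3 → Nat.card (γ i) = p ^ (m+3-i) := by
  have lower : ∀ d, d ≤ m+2 → p ^ d ≤ Nat.card (γ (m+3-d)) := by
    intro d
    induction d with
    | zero => intro _; rw [Nat.sub_zero, hbot, Subgroup.card_bot]; exact le_refl _
    | succ d ih =>
        intro hd
        have h1 : p ^ d ≤ Nat.card (γ (m+3-d)) := ih (by omega)
        have h2 : ¬ (γ (m+2-d) ≤ γ (m+2-d+1)) := strict hbot hnbot _ (by omega)
        have h3 := growp hp hcard (γ (m+2-d+1)) (γ (m+2-d))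
          ((Subgroup.lowerCentralSeries_antitone ⊤) (Nat.le_succ _)) h2
        rw [show m+2-d+1 = m+3-d by omega] at h3
        calc p ^ (d+1) = p * p ^ d := by rw [pow_succ, mul_comm]
          _ ≤ p * Nat.card (γ (m+3-d)) := Nat.mul_le_mul_left p h1
          _ ≤ Nat.card (γ (m+2-d)) := h3
          _ = Nat.card (γ (m+3-(d+1))) := by rw [show m+3-(d+1) = m+2-d by omega]
  have upper : ∀ j, 1 + j ≤ m+3 → Nat.card (γ (1+j)) ≤ p ^ (m+2-j) := by
    intro j
    induction j with
    | zero => intro _; rw [Nat.sub_zero]; exact card_γ1_le hp hcard hbot hnbot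
    | succ j ih =>
        intro hj
        have h1 : Nat.card (γ (1+j)) ≤ p ^ (m+2-j) := ih (by omega)
        have h2 : ¬ (γ (1+j) ≤ γ (1+j+1)) := strict hbot hnbot _ (by omega)
        have h3 := growp hp hcard (γ (1+j+1)) (γ (1+j))
          ((Subgroup.lowerCentralSeries_antitone ⊤) (Nat.le_succ _)) h2
        have h4 : p * Nat.card (γ (1+j+1)) ≤ p * p ^ (m+2-(j+1)) := by
          calc p * Nat.card (γ (1+j+1)) ≤ Nat.card (γ (1+j)) := h3
            _ ≤ p ^ (m+2-j) := h1
            _ = p * p ^ (m+2-(j+1)) := by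
                rw [← pow_succ']
                congr 1
                omega
        have := Nat.le_of_mul_le_mul_left h4 hp.pos
        rw [show 1+(j+1) = 1+j+1 by omega]
        exact this
  intro i h1 h2
  refine le_antisymm ?_ ?_
  · have := upper (i-1) (by omega)
    rw [show 1+(i-1) = i by omega] at this
    rw [show m+3-i = m+2-(i-1) by omega]
    exact this
  · have := lower (m+3-i) (by omega)
    rw [show m+3-(m+3-i) = i by omega] at this
    exact this

lemma conjBound (s : G) (C N : Subgroup G) (h : ∀ c : C, ⁅(c : G), s⁆ ∈ N) :
    Nat.card C ≤ Nat.card N * Nat.card (Subgroup.centralizer {s}) := by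
  apply fiber_card C (Subgroup.centralizer {s}) (f := fun c => (⟨⁅(c : G), s⁆, h c⟩ : N))
  intro a b hab
  simp only [Subtype.mk.injEq] at hab
  rw [commutatorElement_def, commutatorElement_def] at hab
  have h1 : (a : G) * s * (a : G)⁻¹ = (b : G) * s * (b : G)⁻¹ := mul_right_cancel hab
  rw [Subgroup.mem_centralizer_iff]
  intro g hg
  rw [Set.mem_singleton_iff] at hg
  subst hg
  calc g * ((b : G)⁻¹ * a) = (b : G)⁻¹ * ((b : G) * g * (b : G)⁻¹) * a := by group
    _ = (b : G)⁻¹ * ((a : G) * g * (a : G)⁻¹) * a := by rw [← h1]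
    _ = (b : G)⁻¹ * a * g := by group

lemma s_not_γ1 {p m : ℕ} (hp : p.Prime) (hcard : Nat.card G = p ^ (m+4))
    (hbot : γ (m+3) = ⊥) (hnbot : γ (m+2) ≠ ⊥)
    (s : G) (hs : Nat.card (Subgroup.centralizer {s}) = p ^ 2) :
    s ∉ γ 1 := by
  intro hsγ
  have h := conjBound s ⊤ (γ 2) (fun c => by
    have h2 : ⁅s, (c : G)⁆ ∈ γ 2 := by
      rw [lcs_succ 1]
      exact Subgroup.commutator_mem_commutator hsγ (Subgroup.mem_top _)
    have h3 : ⁅s, (c : G)⁆⁻¹ ∈ γ 2 := inv_mem h2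
    rwa [commutatorElement_inv] at h3)
  rw [Subgroup.card_top, hcard, hs,
    cardγ hp hcard hbot hnbot 2 (by omega) (by omega)] at h
  have h2 : p ^ (m+3-2) * p ^ 2 = p ^ (m+3) := by rw [← pow_add]; congr 1 <;> omega
  rw [h2] at h
  have h3 : p ^ (m+3) < p ^ (m+4) := Nat.pow_lt_pow_right hp.one_lt (by omega)
  omega

lemma key_lemma {p m : ℕ} (hp : p.Prime) (hcard : Nat.card G = p ^ (m+4))
    (hbot : γ (m+3) = ⊥) (hnbot : γ (m+2) ≠ ⊥)
    (s : G) (hs : Nat.card (Subgroup.centralizer {s}) = p ^ 2)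
    (i : ℕ) (hi1 : 1 ≤ i) (hi2 : i ≤ m+1)
    (x : G) (hx : x ∈ γ i) (hx2 : x ∉ γ (i+1)) (hxs : ⁅x, s⁆ ∈ γ (i+2)) : False := by
  have hsγ1 : s ∉ γ 1 := s_not_γ1 hp hcard hbot hnbot s hs
  -- the "almost centralizer" subgroup
  let C : Subgroup G :=
    { carrier := {g | ⁅g, s⁆ ∈ γ (i+2)}
      one_mem' := by
        have : ⁅(1 : G), s⁆ = 1 := by group
        simp only [Set.mem_setOf_eq, this]
        exact one_mem _
      mul_mem' := by
        intro a b ha hb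
        simp only [Set.mem_setOf_eq] at ha hb ⊢
        have e : ⁅a * b, s⁆ = (a * ⁅b, s⁆ * a⁻¹) * ⁅a, s⁆ := by group
        rw [e]
        exact mul_mem ((Subgroup.lowerCentralSeries_normal ⊤ (i+2)).conj_mem _ hb a) ha
      inv_mem' := by
        intro a ha
        simp only [Set.mem_setOf_eq] at ha ⊢
        have e : ⁅a⁻¹, s⁆ = a⁻¹ * ⁅a, s⁆⁻¹ * (a⁻¹)⁻¹ := by group
        rw [e]
        exact (Subgroup.lowerCentralSeries_normal ⊤ (i+2)).conj_mem _ (inv_mem ha) a⁻¹ }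
  have hγi1C : γ (i+1) ≤ C := by
    intro g hg
    show ⁅g, s⁆ ∈ γ (i+2)
    rw [lcs_succ (i+1)]
    exact Subgroup.commutator_mem_commutator hg (Subgroup.mem_top _)
  have hxC : x ∈ C := hxs
  have hsC : s ∈ C := by
    show ⁅s, s⁆ ∈ γ (i+2)
    have : ⁅s, s⁆ = 1 := by group
    rw [this]; exact one_mem _
  set A : Subgroup G := Subgroup.closure {x} ⊔ γ (i+1) with hA
  have hAγi : A ≤ γ i :=
    sup_le ((Subgroup.closure_le _).mpr (Set.singleton_subset_iff.mpr hx))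
      ((Subgroup.lowerCentralSeries_antitone ⊤) (Nat.le_succ i))
  have hcardA : p ^ (m+3-i) ≤ Nat.card A := by
    have hne : ¬ A ≤ γ (i+1) := by
      intro hle
      exact hx2 (hle ((le_sup_left : Subgroup.closure {x} ≤ A) (Subgroup.subset_closure rfl)))
    have := growp hp hcard (γ (i+1)) A le_sup_right hne
    rw [cardγ hp hcard hbot hnbot (i+1) (by omega) (by omega)] at this
    calc p ^ (m+3-i) = p * p ^ (m+3-(i+1)) := by rw [← pow_succ']; congr 1; omega
      _ ≤ Nat.card A := this
  set B : Subgroup G := Subgroup.closure {s} ⊔ A with hB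
  have hcardB : p ^ (m+4-i) ≤ Nat.card B := by
    have hne : ¬ B ≤ A := by
      intro hle
      exact hsγ1 (((Subgroup.lowerCentralSeries_antitone ⊤) hi1)
        (hAγi (hle ((le_sup_left : Subgroup.closure {s} ≤ B) (Subgroup.subset_closure rfl)))))
    have := growp hp hcard A B le_sup_right hne
    calc p ^ (m+4-i) = p * p ^ (m+3-i) := by rw [← pow_succ']; congr 1; omega
      _ ≤ p * Nat.card A := Nat.mul_le_mul_left p hcardA
      _ ≤ Nat.card B := this
  have hBC : B ≤ C := by
    refine sup_le ((Subgroup.closure_le _).mpr (Set.singleton_subset_iff.mpr hsC)) ?_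
    exact sup_le ((Subgroup.closure_le _).mpr (Set.singleton_subset_iff.mpr hxC)) hγi1C
  have hcardC : Nat.card C ≤ p ^ (m+3-i) := by
    have h := conjBound s C (γ (i+2)) (fun c => c.2)
    rw [hs, cardγ hp hcard hbot hnbot (i+2) (by omega) (by omega)] at h
    have e : p ^ (m+3-(i+2)) * p ^ 2 = p ^ (m+3-i) := by rw [← pow_add]; congr 1 <;> omega
    rwa [e] at h
  have hle : Nat.card B ≤ Nat.card C :=
    Nat.le_of_dvd Nat.card_pos (Subgroup.card_dvd_of_le hBC)
  have : p ^ (m+4-i) ≤ p ^ (m+3-i) := le_trans hcardB (le_trans hle hcardC)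
  have h3 : p ^ (m+3-i) < p ^ (m+4-i) := Nat.pow_lt_pow_right hp.one_lt (by omega)
  omega

lemma gammat_le_K {p m t : ℕ} (hp : p.Prime) (hcard : Nat.card G = p ^ (m+4))
    (hbot : γ (m+3) = ⊥) (hnbot : γ (m+2) ≠ ⊥)
    (K : Subgroup G) (hK : Nat.card K = p ^ (m+4-t))
    (s : G) (hsK : s ∈ K) (hs : Nat.card (Subgroup.centralizer {s}) = p ^ 2)
    (ht1 : 1 ≤ t) (ht2 : t ≤ m+2) :
    γ t ≤ K := by
  have hcomm_mem : ∀ y ∈ K, ⁅y, s⁆ ∈ K := fun y hy => by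
    rw [commutatorElement_def]
    exact mul_mem (mul_mem (mul_mem hy hsK) (inv_mem hy)) (inv_mem hsK)
  have hQt : ¬ (K ⊓ γ t ≤ γ (t+1)) := by
    intro hQ
    have down : ∀ d, ∀ i, i + d = t → 1 ≤ i → K ⊓ γ i ≤ γ (t+1) := by
      intro d
      induction d with
      | zero =>
          intro i hi _
          obtain rfl : i = t := by omega
          exact hQ
      | succ d ih =>
          intro i hi h1 y hy
          rw [Subgroup.mem_inf] at hy
          by_cases hyy : y ∈ γ (i+1)
          · exact ih (i+1) (by omega) (by omega) (Subgroup.mem_inf.mpr ⟨hy.1, hyy⟩)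
          · exfalso
            have hyK : ⁅y, s⁆ ∈ K := hcomm_mem y hy.1
            have hyγ : ⁅y, s⁆ ∈ γ (i+1) := by
              rw [lcs_succ i]
              exact Subgroup.commutator_mem_commutator hy.2 (Subgroup.mem_top _)
            have h2 : ⁅y, s⁆ ∈ γ (t+1) :=
              ih (i+1) (by omega) (by omega) (Subgroup.mem_inf.mpr ⟨hyK, hyγ⟩)
            have h3 : ⁅y, s⁆ ∈ γ (i+2) := (Subgroup.lowerCentralSeries_antitone ⊤) (by omega) h2
            exact key_lemma hp hcard hbot hnbot s hs i (by omega) (by omega) y hy.2 hyy h3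
    have hKγ1 : K ⊓ γ 1 ≤ γ (t+1) := down (t-1) 1 (by omega) (le_refl 1)
    have hm' : Nat.card (K ⊓ γ 1 : Subgroup G) ≤ p ^ (m+2-t) := by
      have hc := cardγ hp hcard hbot hnbot (t+1) (by omega) (by omega)
      calc Nat.card (K ⊓ γ 1 : Subgroup G) ≤ Nat.card (γ (t+1)) :=
            Nat.le_of_dvd Nat.card_pos (Subgroup.card_dvd_of_le hKγ1)
        _ = p ^ (m+2-t) := by rw [hc]; congr 1; omega
    have hprod := card_mul_le_sup_inf K (γ 1)
    rw [hK, cardγ hp hcard hbot hnbot 1 (by omega) (by omega)] at hprod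
    have hX : p ^ (m+4) ≤ Nat.card (K ⊔ γ 1 : Subgroup G) := by
      have h1 : p ^ (m+4-t) * p ^ (m+3-1) ≤ Nat.card (K ⊔ γ 1 : Subgroup G) * p ^ (m+2-t) :=
        le_trans hprod (Nat.mul_le_mul_left _ hm')
      have h2 : p ^ (m+4) * p ^ (m+2-t) = p ^ (m+4-t) * p ^ (m+3-1) := by
        rw [← pow_add, ← pow_add]; congr 1; omega
      have h3 : p ^ (m+4) * p ^ (m+2-t) ≤ Nat.card (K ⊔ γ 1 : Subgroup G) * p ^ (m+2-t) := by
        rw [h2]; exact h1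
      exact Nat.le_of_mul_le_mul_right h3 (Nat.pow_pos hp.pos)
    have htop : K ⊔ γ 1 = ⊤ := Subgroup.eq_top_of_le_card _ (by rw [hcard]; exact hX)
    have h1 : γ 1 = ⁅(⊤ : Subgroup G), ⊤⁆ := by rw [lcs_succ 0, Subgroup.lowerCentralSeries_zero]
    have hγ12 : γ 1 ≤ γ 2 := by
      rw [h1, Subgroup.commutator_le]
      intro g _ h _
      have hg : g ∈ ((K : Set G) * ((γ 1 : Subgroup G) : Set G)) := by
        rw [← Subgroup.mul_normal, htop]; trivial
      have hh : h ∈ ((K : Set G) * ((γ 1 : Subgroup G) : Set G)) := by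
        rw [← Subgroup.mul_normal, htop]; trivial
      obtain ⟨k, hk, a, ha, rfl⟩ := Set.mem_mul.mp hg
      obtain ⟨k', hk', a', ha', rfl⟩ := Set.mem_mul.mp hh
      apply lem_comm _ _ _ _ ?_ ha ha'
      have hkk : ⁅k, k'⁆ ∈ K ⊓ γ 1 := by
        refine Subgroup.mem_inf.mpr ⟨?_, ?_⟩
        · rw [commutatorElement_def]
          exact mul_mem (mul_mem (mul_mem hk hk') (inv_mem hk)) (inv_mem hk')
        · rw [h1]
          exact Subgroup.commutator_mem_commutator (Subgroup.mem_top _) (Subgroup.mem_top _)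
      exact (Subgroup.lowerCentralSeries_antitone ⊤) (by omega) (hKγ1 hkk)
    exact strict hbot hnbot 1 (by omega) hγ12
  have up : ∀ j, t + j ≤ m+2 → ¬ (K ⊓ γ (t+j) ≤ γ (t+j+1)) := by
    intro j
    induction j with
    | zero => intro _; exact hQt
    | succ j ih =>
        intro hj hle
        obtain ⟨x, hx, hx2⟩ := SetLike.not_le_iff_exists.mp (ih (by omega))
        rw [Subgroup.mem_inf] at hx
        have hyK : ⁅x, s⁆ ∈ K := hcomm_mem x hx.1
        have hyγ : ⁅x, s⁆ ∈ γ (t+j+1) := by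
          rw [lcs_succ (t+j)]
          exact Subgroup.commutator_mem_commutator hx.2 (Subgroup.mem_top _)
        have h2 : ⁅x, s⁆ ∈ γ (t+j+2) := hle (Subgroup.mem_inf.mpr ⟨hyK, hyγ⟩)
        exact key_lemma hp hcard hbot hnbot s hs (t+j) (by omega) (by omega) x hx.2 hx2 h2
  have cover : ∀ d, d ≤ m+3-t → γ (m+3-d) ≤ K := by
    intro d
    induction d with
    | zero => intro _; rw [Nat.sub_zero, hbot]; exact bot_le
    | succ d ih =>
        intro hd
        have hiK : γ (m+3-d) ≤ K := ih (by omega)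
        have hii : m+3-(d+1)+1 = m+3-d := by omega
        have hQ : ¬ (K ⊓ γ (m+3-(d+1)) ≤ γ (m+3-(d+1)+1)) := by
          have := up (m+3-(d+1)-t) (by omega)
          rwa [show t+(m+3-(d+1)-t) = m+3-(d+1) by omega] at this
        obtain ⟨x, hx, hx2⟩ := SetLike.not_le_iff_exists.mp hQ
        rw [Subgroup.mem_inf] at hx
        have hAle : Subgroup.closure {x} ⊔ γ (m+3-(d+1)+1) ≤ γ (m+3-(d+1)) :=
          sup_le ((Subgroup.closure_le _).mpr (Set.singleton_subset_iff.mpr hx.2))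
            ((Subgroup.lowerCentralSeries_antitone ⊤) (Nat.le_succ _))
        have hcard1 : Nat.card (γ (m+3-(d+1))) ≤
            Nat.card (Subgroup.closure {x} ⊔ γ (m+3-(d+1)+1) : Subgroup G) := by
          have hne : ¬ (Subgroup.closure {x} ⊔ γ (m+3-(d+1)+1) ≤ γ (m+3-(d+1)+1)) := fun hle =>
            hx2 (hle ((le_sup_left : Subgroup.closure {x} ≤ _) (Subgroup.subset_closure rfl)))
          have hg := growp hp hcard (γ (m+3-(d+1)+1)) _ le_sup_right hne
          rw [cardγ hp hcard hbot hnbot (m+3-(d+1)+1) (by omega) (by omega)] at hg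
          rw [cardγ hp hcard hbot hnbot (m+3-(d+1)) (by omega) (by omega)]
          calc p ^ (m+3-(m+3-(d+1)))
              = p * p ^ (m+3-(m+3-(d+1)+1)) := by rw [← pow_succ']; congr 1 <;> omega
            _ ≤ _ := hg
        have hAeq : Subgroup.closure {x} ⊔ γ (m+3-(d+1)+1) = γ (m+3-(d+1)) :=
          Subgroup.eq_of_le_of_card_ge hAle hcard1
        rw [← hAeq]
        refine sup_le ((Subgroup.closure_le _).mpr (Set.singleton_subset_iff.mpr hx.1)) ?_
        rw [hii]
        exact hiK
  have := cover (m+3-t) (le_refl _)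
  rwa [show m+3-(m+3-t) = t by omega] at this

end Main

theorem stmt10 {p n : ℕ} (hp : p.Prime) {G : Type} [Group G] [Finite G]
    (hcard : Nat.card G = p ^ n) (hn : 4 ≤ n)
    -- `G` has maximal class, i.e. nilpotency class exactly `n - 1`
    (hmc₁ : (⊤ : Subgroup G).lowerCentralSeries (n - 1) = ⊥) (hmc₂ : (⊤ : Subgroup G).lowerCentralSeries (n - 2) ≠ ⊥)
    (t : ℕ) (K : Subgroup G) (hK : Nat.card K = p ^ (n - t))
    (s : G) (hsK : s ∈ K)
    -- `s` is a uniform element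
    (hs : Nat.card (Subgroup.centralizer {s}) = p ^ 2) :
    K = Subgroup.closure {s} ⊔ (⊤ : Subgroup G).lowerCentralSeries t := by
  obtain ⟨m, rfl⟩ : ∃ m, n = m + 4 := ⟨n - 4, by omega⟩
  have hbot : (⊤ : Subgroup G).lowerCentralSeries (m+3) = ⊥ := by
    rw [show m+3 = m+4-1 by omega]; exact hmc₁
  have hnbot : (⊤ : Subgroup G).lowerCentralSeries (m+2) ≠ ⊥ := by
    rw [show m+2 = m+4-2 by omega]; exact hmc₂
  have hsγ1 : s ∉ (⊤ : Subgroup G).lowerCentralSeries 1 := s_not_γ1 hp hcard hbot hnbot s hs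
  rcases Nat.lt_or_ge t 1 with ht | ht
  · obtain rfl : t = 0 := by omega
    have hKtop : K = ⊤ := Subgroup.eq_top_of_card_eq _ (by rw [hK, hcard]; norm_num)
    rw [hKtop, Subgroup.lowerCentralSeries_zero, sup_top_eq]
  · rcases Nat.lt_or_ge t (m+3) with ht2 | ht2
    · -- main case : 1 ≤ t ≤ m+2
      have hγt : (⊤ : Subgroup G).lowerCentralSeries t ≤ K :=
        gammat_le_K hp hcard hbot hnbot K hK s hsK hs ht (by omega)
      have hR : Subgroup.closure {s} ⊔ (⊤ : Subgroup G).lowerCentralSeries t ≤ K :=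
        sup_le ((Subgroup.closure_le _).mpr (Set.singleton_subset_iff.mpr hsK)) hγt
      have hne : ¬ (Subgroup.closure {s} ⊔ (⊤ : Subgroup G).lowerCentralSeries t ≤ (⊤ : Subgroup G).lowerCentralSeries t) := by
        intro h
        exact hsγ1 ((Subgroup.lowerCentralSeries_antitone ⊤) ht
          (h ((le_sup_left : Subgroup.closure {s} ≤ _) (Subgroup.subset_closure rfl))))
      have hg := growp hp hcard ((⊤ : Subgroup G).lowerCentralSeries t) _ le_sup_right hne
      rw [cardγ hp hcard hbot hnbot t ht (by omega)] at hg
      have hcd : Nat.card K ≤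
          Nat.card (Subgroup.closure {s} ⊔ (⊤ : Subgroup G).lowerCentralSeries t : Subgroup G) := by
        rw [hK]
        calc p ^ (m+4-t) = p * p ^ (m+3-t) := by rw [← pow_succ']; congr 1 <;> omega
          _ ≤ _ := hg
      exact (Subgroup.eq_of_le_of_card_ge hR hcd).symm
    · rcases Nat.lt_or_ge t (m+4) with ht3 | ht3
      · -- t = m+3
        obtain rfl : t = m+3 := by omega
        rw [hbot, sup_bot_eq]
        have hcl : Subgroup.closure {s} ≤ K :=
          (Subgroup.closure_le _).mpr (Set.singleton_subset_iff.mpr hsK)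
        have hs1 : s ≠ 1 := fun h => hsγ1 (h ▸ one_mem _)
        have hcK : Nat.card K = p := by rw [hK, show m+4-(m+3) = 1 by omega, pow_one]
        have hdvd : Nat.card (Subgroup.closure {s} : Subgroup G) ∣ p :=
          hcK ▸ Subgroup.card_dvd_of_le hcl
        have hne1 : Nat.card (Subgroup.closure {s} : Subgroup G) ≠ 1 := by
          intro h
          have hb := Subgroup.eq_bot_of_card_eq _ h
          have : s ∈ (⊥ : Subgroup G) := hb ▸ Subgroup.subset_closure rfl
          exact hs1 (Subgroup.mem_bot.mp this)
        have hceq : Nat.card (Subgroup.closure {s} : Subgroup G) = p :=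
          ((Nat.Prime.eq_one_or_self_of_dvd hp _ hdvd).resolve_left hne1)
        exact (Subgroup.eq_of_le_of_card_ge hcl (by rw [hcK, hceq])).symm
      · -- t ≥ m+4 : |K| = 1, impossible since s ∈ K would be trivial
        exfalso
        have h0 : m+4-t = 0 := by omega
        rw [h0, pow_zero] at hK
        have hKbot := Subgroup.eq_bot_of_card_eq _ hK
        rw [hKbot] at hsK
        exact hsγ1 (Subgroup.mem_bot.mp hsK ▸ one_mem _)
end

section
/- Let G be a finite p-group of maximal class of order at least p^4, and let H be a maximal subgroup of G with H ≠ G_1 := C_G(γ_2(G)/γ_4(G)). Then H' = γ_3(G). -/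
open Subgroup
open scoped commutatorElement

section aux
variable {G : Type*} [Group G]

lemma lcs_succ_comm (k : ℕ) :
    (⊤ : Subgroup G).lowerCentralSeries (k+1) = ⁅(⊤ : Subgroup G).lowerCentralSeries k, ⊤⁆ := rfl

lemma lcs_stab' {k : ℕ} (h : (⊤ : Subgroup G).lowerCentralSeries (k+1) = (⊤ : Subgroup G).lowerCentralSeries k) :
    ∀ m, (⊤ : Subgroup G).lowerCentralSeries (k + m) = (⊤ : Subgroup G).lowerCentralSeries k := by
  intro m
  induction m with
  | zero => rfl
  | succ m ih =>
    rw [← Nat.add_assoc, Subgroup.lowerCentralSeries_succ, ih, ← Subgroup.lowerCentralSeries_succ, h]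

lemma comm_mem_of_comm_mem (N : Subgroup G) [N.Normal] {x c y d : G}
    (h1 : ⁅x, y⁆ ∈ N) (h2 : ⁅x, d⁆ ∈ N) (h3 : ⁅c, y⁆ ∈ N) (h4 : ⁅c, d⁆ ∈ N) :
    ⁅x * c, y * d⁆ ∈ N := by
  have e : ∀ a b : G, ⁅a, b⁆ ∈ N ↔
      Commute ((QuotientGroup.mk' N) a) ((QuotientGroup.mk' N) b) := by
    intro a b
    rw [← commutatorElement_eq_one_iff_commute, ← map_commutatorElement,
      ← MonoidHom.mem_ker, QuotientGroup.ker_mk']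
  rw [e] at h1 h2 h3 h4 ⊢
  simp only [map_mul]
  exact (h1.mul_right h2).mul_left (h3.mul_right h4)

lemma sandwich [Finite G] {p : ℕ} (hp : p.Prime) {A B C : Subgroup G}
    (hAB : A ≤ B) (hBC : B ≤ C) (hne : A ≠ B) (hc : Nat.card C = p * Nat.card A) :
    B = C := by
  obtain ⟨u, hu⟩ := Subgroup.card_dvd_of_le hAB
  have hposA : 0 < Nat.card A := Nat.card_pos
  have hBc : Nat.card B ∣ p * Nat.card A := hc ▸ Subgroup.card_dvd_of_le hBC
  have hup : u ∣ p := by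
    have : Nat.card A * u ∣ Nat.card A * p := by
      rw [← hu]; rwa [mul_comm p] at hBc
    exact (mul_dvd_mul_iff_left hposA.ne').mp this
  rcases (Nat.Prime.eq_one_or_self_of_dvd hp u hup) with h1 | h1
  · exact absurd (Subgroup.eq_of_le_of_card_ge hAB (by rw [hu, h1, mul_one])) hne
  · exact Subgroup.eq_of_le_of_card_ge hBC (by rw [hc, hu, h1, mul_comm])

lemma comm_le_lcs2 {K : Subgroup G} {s : G}
    (hK : K ≤ Subgroup.closure {s} ⊔ (⊤ : Subgroup G).lowerCentralSeries 1) :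
    ⁅K, K⁆ ≤ (⊤ : Subgroup G).lowerCentralSeries 2 := by
  have hdec : ∀ g ∈ K, ∃ m : ℤ, ∃ c ∈ (⊤ : Subgroup G).lowerCentralSeries 1, g = s ^ m * c := by
    intro g hg
    have := hK hg
    rw [← SetLike.mem_coe, Subgroup.mul_normal] at this
    obtain ⟨a, ha, b, hb, hab⟩ := this
    obtain ⟨m, hm⟩ := Subgroup.mem_closure_singleton.mp ha
    exact ⟨m, b, hb, by rw [← hab, hm]⟩
  rw [Subgroup.commutator_le]
  intro g₁ hg₁ g₂ hg₂
  obtain ⟨m, c, hc, rfl⟩ := hdec g₁ hg₁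
  obtain ⟨k, d, hd, rfl⟩ := hdec g₂ hg₂
  have hmem : ∀ e ∈ (⊤ : Subgroup G).lowerCentralSeries 1, ∀ t : G,
      ⁅e, t⁆ ∈ (⊤ : Subgroup G).lowerCentralSeries 2 := by
    intro e he t
    rw [show (2:ℕ) = 1 + 1 from rfl, Subgroup.lowerCentralSeries_succ]
    exact Subgroup.commutator_mem_commutator he (Subgroup.mem_top t)
  apply comm_mem_of_comm_mem
  · rw [commutatorElement_eq_one_iff_commute.mpr ((Commute.refl s).zpow_zpow m k)]
    exact one_mem _
  · rw [← commutatorElement_inv]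
    exact inv_mem (hmem d hd (s ^ m))
  · exact hmem c hc (s ^ k)
  · exact hmem c hc d

end aux

section count
variable {G : Type*} [Group G] [Finite G] {p n : ℕ}

omit [Finite G] in
lemma lcs_strict (hn : 4 ≤ n)
    (hmc₁ : (⊤ : Subgroup G).lowerCentralSeries (n - 1) = ⊥) (hmc₂ : (⊤ : Subgroup G).lowerCentralSeries (n - 2) ≠ ⊥) :
    ∀ k ≤ n - 2, (⊤ : Subgroup G).lowerCentralSeries (k+1) ≠ (⊤ : Subgroup G).lowerCentralSeries k := by
  intro k hk h
  apply hmc₂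
  have h1 := lcs_stab' h (n - 2 - k)
  have h2 := lcs_stab' h (n - 1 - k)
  rw [show k + (n-2-k) = n-2 by omega] at h1
  rw [show k + (n-1-k) = n-1 by omega, hmc₁] at h2
  rw [h1, ← h2]

lemma step_dvd (hp : p.Prime) (hcard : Nat.card G = p ^ n) {A B : Subgroup G}
    (hAB : A ≤ B) (hne : A ≠ B) : p * Nat.card A ∣ Nat.card B := by
  obtain ⟨u, hu⟩ := Subgroup.card_dvd_of_le hAB
  have hposA : 0 < Nat.card A := Nat.card_pos
  have hBn : Nat.card B ∣ p ^ n := by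
    rw [← hcard]; exact B.card_subgroup_dvd_card
  have hu1 : u ≠ 1 := by
    rintro rfl
    exact hne (Subgroup.eq_of_le_of_card_ge hAB (by rw [hu, mul_one]))
  have hupn : u ∣ p ^ n := (Dvd.intro_left _ hu.symm).trans hBn
  obtain ⟨i, hi, rfl⟩ := (Nat.dvd_prime_pow hp).mp hupn
  have hi0 : i ≠ 0 := by rintro rfl; exact hu1 rfl
  rw [hu, mul_comm p (Nat.card ↥A)]
  exact mul_dvd_mul_left _ (dvd_pow_self p hi0)

lemma lcs_card_lb (hp : p.Prime) (hcard : Nat.card G = p ^ n) (hn : 4 ≤ n)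
    (hmc₁ : (⊤ : Subgroup G).lowerCentralSeries (n - 1) = ⊥) (hmc₂ : (⊤ : Subgroup G).lowerCentralSeries (n - 2) ≠ ⊥) :
    ∀ j ≤ n - 1, p ^ j ∣ Nat.card ((⊤ : Subgroup G).lowerCentralSeries (n - 1 - j)) := by
  intro j
  induction j with
  | zero => simp
  | succ j ih =>
    intro hj
    have ih' := ih (by omega)
    have hk : n - 1 - j = (n - 1 - (j+1)) + 1 := by omega
    have hstrict := lcs_strict hn hmc₁ hmc₂ (n - 1 - (j+1)) (by omega)
    rw [hk] at ih'
    have hle : (⊤ : Subgroup G).lowerCentralSeries ((n - 1 - (j+1)) + 1) ≤ (⊤ : Subgroup G).lowerCentralSeries (n - 1 - (j+1)) :=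
      Subgroup.lowerCentralSeries_antitone ⊤ (Nat.le_succ _)
    have := step_dvd hp hcard hle hstrict
    calc p ^ (j+1) = p * p ^ j := by ring
    _ ∣ p * Nat.card ((⊤ : Subgroup G).lowerCentralSeries ((n - 1 - (j+1)) + 1)) := mul_dvd_mul_left p ih'
    _ ∣ Nat.card ((⊤ : Subgroup G).lowerCentralSeries (n - 1 - (j+1))) := this

lemma lcs1_card_ub (hp : p.Prime) (hcard : Nat.card G = p ^ n) (hn : 4 ≤ n)
    (hmc₁ : (⊤ : Subgroup G).lowerCentralSeries (n - 1) = ⊥) (hmc₂ : (⊤ : Subgroup G).lowerCentralSeries (n - 2) ≠ ⊥) :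
    Nat.card ((⊤ : Subgroup G).lowerCentralSeries 1) ∣ p ^ (n - 2) := by
  set S1 := (⊤ : Subgroup G).lowerCentralSeries 1 with hS1
  have hstrict := lcs_strict hn hmc₁ hmc₂ 1 (by omega)
  have hcm : Nat.card S1 * S1.index = p ^ n := by
    rw [Subgroup.card_mul_index, hcard]
  have hidvd : S1.index ∣ p ^ n := Dvd.intro_left _ hcm
  obtain ⟨i, hi, hie⟩ := (Nat.dvd_prime_pow hp).mp hidvd
  have hcdvd : Nat.card S1 ∣ p ^ n := by rw [← hcard]; exact S1.card_subgroup_dvd_card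
  obtain ⟨a, ha, hae⟩ := (Nat.dvd_prime_pow hp).mp hcdvd
  -- key claim : 2 ≤ i
  have h2i : 2 ≤ i := by
    by_contra hlt
    -- then the quotient by S1 is cyclic, so the lcs stabilizes at 1
    have key : (⊤ : Subgroup G).lowerCentralSeries 2 = (⊤ : Subgroup G).lowerCentralSeries 1 := by
      rcases (by omega : i = 0 ∨ i = 1) with h0 | h0
      · -- index 1 : S1 = ⊤
        have htop : S1 = ⊤ := Subgroup.index_eq_one.mp (by rw [hie, h0, pow_zero])
        have : (⊤ : Subgroup G).lowerCentralSeries 2 = ⁅S1, (⊤ : Subgroup G)⁆ :=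
          Subgroup.lowerCentralSeries_succ ⊤ 1
        rw [this, htop]
        rfl
      · -- index p
        have hne_top : S1 ≠ ⊤ := by
          intro h
          have h1 : S1.index = 1 := by rw [h, Subgroup.index_top]
          rw [hie, h0, pow_one] at h1
          exact hp.one_lt.ne' h1
        obtain ⟨s, hs⟩ : ∃ s : G, s ∉ S1 := by
          by_contra hc
          push_neg at hc
          exact hne_top ((Subgroup.eq_top_iff' S1).mpr hc)
        have hT : Subgroup.closure {s} ⊔ S1 = ⊤ := by
          apply sandwich hp le_sup_right le_top
          · intro h
            exact hs (h ▸ Subgroup.mem_sup_left (Subgroup.subset_closure (Set.mem_singleton s)))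
          · rw [Subgroup.card_top, hcard, ← hcm, hie, h0, pow_one, mul_comm]
        apply le_antisymm (Subgroup.lowerCentralSeries_antitone ⊤ (by omega))
        calc (⊤ : Subgroup G).lowerCentralSeries 1 = ⁅(⊤ : Subgroup G), (⊤ : Subgroup G)⁆ :=
              Subgroup.lowerCentralSeries_succ ⊤ 0
        _ = ⁅Subgroup.closure {s} ⊔ S1, Subgroup.closure {s} ⊔ S1⁆ := by rw [hT]
        _ ≤ (⊤ : Subgroup G).lowerCentralSeries 2 := comm_le_lcs2 le_rfl
    exact hstrict key
  -- now card S1 = p ^ a with a ≤ n - 2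
  have : p ^ a * p ^ i = p ^ n := by rw [← hae, ← hie]; exact hcm
  rw [← pow_add] at this
  have han : a + i = n := Nat.pow_right_injective hp.two_le this
  rw [hae]
  exact pow_dvd_pow p (by omega)

lemma lcs_card_eq (hp : p.Prime) (hcard : Nat.card G = p ^ n) (hn : 4 ≤ n)
    (hmc₁ : (⊤ : Subgroup G).lowerCentralSeries (n - 1) = ⊥) (hmc₂ : (⊤ : Subgroup G).lowerCentralSeries (n - 2) ≠ ⊥) :
    ∀ k, 1 ≤ k → k ≤ n - 1 → Nat.card ((⊤ : Subgroup G).lowerCentralSeries k) = p ^ (n - 1 - k) := by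
  have ub : ∀ k, 1 ≤ k → k ≤ n - 1 → Nat.card ((⊤ : Subgroup G).lowerCentralSeries k) ∣ p ^ (n - 1 - k) := by
    intro k
    induction k with
    | zero => omega
    | succ k ih =>
      intro _ hk1
      rcases Nat.eq_or_lt_of_le (show 1 ≤ k + 1 from by omega) with h1 | h1
      · rw [show k + 1 = 1 by omega, show n - 1 - 1 = n - 2 by omega]
        exact lcs1_card_ub hp hcard hn hmc₁ hmc₂
      · have hk : 1 ≤ k := by omega
        have ihk := ih hk (by omega)
        have hstrict := lcs_strict hn hmc₁ hmc₂ k (by omega)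
        have hle : (⊤ : Subgroup G).lowerCentralSeries (k+1) ≤ (⊤ : Subgroup G).lowerCentralSeries k :=
          Subgroup.lowerCentralSeries_antitone ⊤ (Nat.le_succ _)
        have hstep := step_dvd hp hcard hle hstrict
        have : p * Nat.card ((⊤ : Subgroup G).lowerCentralSeries (k+1)) ∣ p * p ^ (n - 2 - k) := by
          refine hstep.trans ?_
          rw [← pow_succ', show n - 2 - k + 1 = n - 1 - k by omega]
          exact ihk
        have := (mul_dvd_mul_iff_left (Nat.Prime.ne_zero hp)).mp this
        rwa [show n - 2 - k = n - 1 - (k+1) by omega] at this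
  intro k hk1 hk2
  apply Nat.dvd_antisymm (ub k hk1 hk2)
  have := lcs_card_lb hp hcard hn hmc₁ hmc₂ (n - 1 - k) (by omega)
  rwa [show n - 1 - (n - 1 - k) = k by omega] at this

end count

theorem stmt11 {p n : ℕ} (hp : p.Prime) {G : Type} [Group G] [Finite G]
    (hcard : Nat.card G = p ^ n) (hn : 4 ≤ n)
    -- `G` has maximal class, i.e. nilpotency class exactly `n - 1`
    (hmc₁ : (⊤ : Subgroup G).lowerCentralSeries (n - 1) = ⊥) (hmc₂ : (⊤ : Subgroup G).lowerCentralSeries (n - 2) ≠ ⊥)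
    -- `G1 = C_G(γ₂(G)/γ₄(G))`
    (G1 : Subgroup G)
    (hG1 : ∀ g : G, g ∈ G1 ↔
      ∀ x ∈ (⊤ : Subgroup G).lowerCentralSeries 1, ⁅g, x⁆ ∈ (⊤ : Subgroup G).lowerCentralSeries 3)
    (H : Subgroup G) (hHmax : H.index = p) (hH : H ≠ G1) :
    Subgroup.map H.subtype (commutator H) = (⊤ : Subgroup G).lowerCentralSeries 2 := by
  haveI : Fact p.Prime := ⟨hp⟩
  have hcards := lcs_card_eq hp hcard hn hmc₁ hmc₂
  have hc1 : Nat.card ((⊤ : Subgroup G).lowerCentralSeries 1) = p ^ (n-2) := by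
    have := hcards 1 (by omega) (by omega); rwa [show n-1-1 = n-2 by omega] at this
  have hc2 : Nat.card ((⊤ : Subgroup G).lowerCentralSeries 2) = p ^ (n-3) := by
    have := hcards 2 (by omega) (by omega); rwa [show n-1-2 = n-3 by omega] at this
  have hc3 : Nat.card ((⊤ : Subgroup G).lowerCentralSeries 3) = p ^ (n-4) := by
    have := hcards 3 (by omega) (by omega); rwa [show n-1-3 = n-4 by omega] at this
  -- `H` is a normal maximal subgroup
  have hne_top : H ≠ ⊤ := by
    intro h
    rw [h, Subgroup.index_top] at hHmax
    exact hp.one_lt.ne' hHmax.symm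
  have hcoatom : IsCoatom H := by
    refine ⟨lt_top_iff_ne_top.mp (lt_of_le_of_ne le_top hne_top), ?_⟩
    intro K hK
    have hle := le_of_lt hK
    have hrel := Subgroup.relIndex_mul_index hle
    rw [hHmax] at hrel
    rcases hp.eq_one_or_self_of_dvd K.index (Dvd.intro_left _ hrel) with h1 | h1
    · exact Subgroup.index_eq_one.mp h1
    · exfalso
      rw [h1] at hrel
      have : H.relIndex K = 1 := by
        have hp0 : p ≠ 0 := hp.pos.ne'
        exact Nat.eq_of_mul_eq_mul_right hp.pos (by rw [hrel, one_mul])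
      exact hK.not_ge (Subgroup.relIndex_eq_one.mp this)
  haveI : Group.IsNilpotent G := Subgroup.nilpotent_iff_lowerCentralSeries.mpr ⟨n-1, hmc₁⟩
  haveI hHnormal : H.Normal :=
    Subgroup.NormalizerCondition.normal_of_coatom H Group.normalizerCondition_of_isNilpotent hcoatom
  -- `γ₂(G) ≤ H`
  have hS1H : (⊤ : Subgroup G).lowerCentralSeries 1 ≤ H := by
    have hcy : IsCyclic (G ⧸ H) := isCyclic_of_prime_card (by rw [← Subgroup.index_eq_card, hHmax])
    obtain ⟨g, hg⟩ := hcy.exists_generator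
    have h1 : (⊤ : Subgroup G).lowerCentralSeries 1 = ⁅(⊤ : Subgroup G), ⊤⁆ := Subgroup.lowerCentralSeries_succ ⊤ 0
    rw [h1, Subgroup.commutator_le]
    intro a _ b _
    have : ((QuotientGroup.mk' H) ⁅a, b⁆ : G ⧸ H) = 1 := by
      rw [map_commutatorElement, commutatorElement_eq_one_iff_commute]
      obtain ⟨i, hi⟩ := Subgroup.mem_zpowers_iff.mp (hg ((QuotientGroup.mk' H) a))
      obtain ⟨j, hj⟩ := Subgroup.mem_zpowers_iff.mp (hg ((QuotientGroup.mk' H) b))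
      rw [← hi, ← hj]
      exact (Commute.refl g).zpow_zpow i j
    exact (QuotientGroup.eq_one_iff _).mp this
  -- `Nat.card H = p ^ (n-1)`
  have hcH : Nat.card H = p ^ (n-1) := by
    have hcm := Subgroup.card_mul_index H
    rw [hHmax, hcard] at hcm
    have hdvd : Nat.card H ∣ p ^ n := by rw [← hcard]; exact H.card_subgroup_dvd_card
    obtain ⟨a, ha, hae⟩ := (Nat.dvd_prime_pow hp).mp hdvd
    rw [hae, ← pow_succ] at hcm
    have := Nat.pow_right_injective hp.two_le hcm
    rw [hae]
    congr 1
    omega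
  -- decompose `H` as `⟨s₀⟩ γ₂(G)`
  have hS1neH : (⊤ : Subgroup G).lowerCentralSeries 1 ≠ H := by
    intro h
    have : p ^ (n-2) = p ^ (n-1) := by rw [← hc1, h, hcH]
    have := Nat.pow_right_injective hp.two_le this
    omega
  obtain ⟨s₀, hs₀H, hs₀S1⟩ : ∃ s₀, s₀ ∈ H ∧ s₀ ∉ (⊤ : Subgroup G).lowerCentralSeries 1 := by
    by_contra hc
    push_neg at hc
    exact hS1neH (le_antisymm hS1H hc)
  have hT : Subgroup.closure {s₀} ⊔ (⊤ : Subgroup G).lowerCentralSeries 1 = H := by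
    apply sandwich hp le_sup_right
      (sup_le ((Subgroup.closure_le H).mpr (Set.singleton_subset_iff.mpr hs₀H)) hS1H)
    · intro h
      apply hs₀S1
      rw [h]
      exact Subgroup.mem_sup_left (Subgroup.subset_closure (Set.mem_singleton s₀))
    · rw [hcH, hc1, ← pow_succ']
      congr 1
      omega
  -- `N := [H,H] ≤ γ₃(G)`
  set N : Subgroup G := ⁅H, H⁆ with hN
  have hNle : N ≤ (⊤ : Subgroup G).lowerCentralSeries 2 := comm_le_lcs2 (le_of_eq hT.symm)
  haveI hNnormal : N.Normal := Subgroup.commutator_normal H H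
  -- `G1 ≠ ⊤`
  have hG1netop : G1 ≠ ⊤ := by
    intro htop
    have h23 : (⊤ : Subgroup G).lowerCentralSeries 2 ≤ (⊤ : Subgroup G).lowerCentralSeries 3 := by
      rw [show (2:ℕ) = 1+1 from rfl, lcs_succ_comm, Subgroup.commutator_le]
      intro x hx g _
      rw [← commutatorElement_inv]
      exact inv_mem ((hG1 g).mp (htop ▸ Subgroup.mem_top g) x hx)
    exact lcs_strict hn hmc₁ hmc₂ 2 (by omega)
      (le_antisymm (Subgroup.lowerCentralSeries_antitone ⊤ (by omega)) h23)
  -- pick `s ∈ H` with `s ∉ G1`, and `x ∈ γ₂` with `⁅s,x⁆ ∉ γ₄`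
  obtain ⟨s, hsH, hsG1⟩ : ∃ s, s ∈ H ∧ s ∉ G1 := by
    by_contra hc
    push_neg at hc
    have hle : H ≤ G1 := hc
    rcases eq_or_lt_of_le hle with h | h
    · exact hH h
    · exact hG1netop (hcoatom.2 G1 h)
  obtain ⟨x, hxS1, hxc⟩ : ∃ x ∈ (⊤ : Subgroup G).lowerCentralSeries 1, ⁅s, x⁆ ∉ (⊤ : Subgroup G).lowerCentralSeries 3 := by
    by_contra hc
    push_neg at hc
    exact hsG1 ((hG1 s).mpr hc)
  have hsxN : ⁅s, x⁆ ∈ N := Subgroup.commutator_mem_commutator hsH (hS1H hxS1)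
  -- `N ⊔ γ₄ = γ₃`
  have hsup : N ⊔ (⊤ : Subgroup G).lowerCentralSeries 3 = (⊤ : Subgroup G).lowerCentralSeries 2 := by
    apply sandwich hp le_sup_right (sup_le hNle (Subgroup.lowerCentralSeries_antitone ⊤ (by omega)))
    · intro h
      exact hxc ((le_sup_left.trans (le_of_eq h.symm)) hsxN)
    · rw [hc2, hc3, ← pow_succ']
      congr 1
      omega
  -- `γ₃ ≤ N` by pushing down the series
  have claim1 : ∀ j, (⊤ : Subgroup G).lowerCentralSeries (j+2) ≤ N ⊔ (⊤ : Subgroup G).lowerCentralSeries (j+3) := by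
    intro j
    induction j with
    | zero => exact hsup.ge
    | succ j ih =>
      show (⊤ : Subgroup G).lowerCentralSeries (j+3) ≤ N ⊔ (⊤ : Subgroup G).lowerCentralSeries (j+4)
      rw [lcs_succ_comm (j+2), Subgroup.commutator_le]
      intro g hg t _
      have hgm := ih hg
      rw [← SetLike.mem_coe, Subgroup.normal_mul] at hgm
      obtain ⟨a, ha, b, hb, rfl⟩ := hgm
      have hbt : ⁅b, t⁆ ∈ (⊤ : Subgroup G).lowerCentralSeries (j+4) := by
        rw [Subgroup.lowerCentralSeries_succ _ (j+3)]
        exact Subgroup.commutator_mem_commutator hb (Subgroup.mem_top t)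
      have hat : ⁅a, t⁆ ∈ N := by
        have heq : ⁅a, t⁆ = a * (t * a⁻¹ * t⁻¹) := by group
        rw [heq]
        exact mul_mem ha (hNnormal.conj_mem a⁻¹ (inv_mem ha) t)
      have key : ⁅a * b, t⁆ = (a * ⁅b, t⁆ * a⁻¹) * ⁅a, t⁆ := by group
      rw [key]
      exact mul_mem
        (Subgroup.mem_sup_right ((Subgroup.lowerCentralSeries_normal ⊤ (j+4)).conj_mem _ hbt a))
        (Subgroup.mem_sup_left hat)
  have claim2 : ∀ j, (⊤ : Subgroup G).lowerCentralSeries 2 ≤ N ⊔ (⊤ : Subgroup G).lowerCentralSeries (j+3) := by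
    intro j
    induction j with
    | zero => exact hsup.ge
    | succ j ih =>
      refine ih.trans (sup_le le_sup_left ?_)
      exact (claim1 (j+1)).trans (sup_le le_sup_left le_sup_right)
  have hfinal : (⊤ : Subgroup G).lowerCentralSeries 2 ≤ N := by
    have := claim2 (n - 4)
    rwa [show n - 4 + 3 = n - 1 by omega, hmc₁, sup_bot_eq] at this
  have hNeq : N = (⊤ : Subgroup G).lowerCentralSeries 2 := le_antisymm hNle hfinal
  rw [← hNeq, hN, _root_.commutator_def, Subgroup.map_commutator, ← MonoidHom.range_eq_map,
    Subgroup.range_subtype]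
end

section
/- The wreath product C_p ≀ C_p (of order p^{p+1}) admits a simple virtual endomorphism from a maximal subgroup; equivalently, it is a self-similar p-group of maximal class of order p^{p+1}. -/
/-- The base group `(C_p)^p` of the wreath product `C_p ≀ C_p`. -/
abbrev WreathBase (p : ℕ) := ZMod p → Multiplicative (ZMod p)

/-- Cyclic shift of coordinates by `k`. -/
def shiftAut (p : ℕ) (k : ZMod p) : WreathBase p ≃* WreathBase p where
  toFun f := fun i => f (i + k)
  invFun f := fun i => f (i - k)
  left_inv f := funext fun i => by simp
  right_inv f := funext fun i => by simp
  map_mul' f g := rfl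

/-- The action of the top group `C_p` on the base, by cyclic shifts. -/
def shiftHom (p : ℕ) : Multiplicative (ZMod p) →* MulAut (WreathBase p) where
  toFun k := shiftAut p k.toAdd
  map_one' := by
    apply MulEquiv.ext; intro f; funext i; simp [shiftAut]
  map_mul' a b := by
    apply MulEquiv.ext; intro f; funext i
    show f (i + (Multiplicative.toAdd a + Multiplicative.toAdd b)) = _
    simp [shiftAut]; congr 1; abel

/-- The regular wreath product `C_p ≀ C_p`. -/
abbrev WreathProductCpCp (p : ℕ) :=
  WreathBase p ⋊[shiftHom p] Multiplicative (ZMod p)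

namespace Stmt14Aux

open SemidirectProduct
open scoped commutatorElement

/-- Commutator formula in a semidirect product with abelian quotient. -/
lemma comm_formula {N G : Type*} [Group N] [Group G] (φ : G →* MulAut N)
    (hcomm : ∀ x y : G, x * y = y * x) (a b : N ⋊[φ] G) :
    ⁅a, b⁆ = inl (a.left * φ a.right b.left * (φ b.right a.left)⁻¹ * b.left⁻¹) := by
  have hr : (a * b * a⁻¹ * b⁻¹).right = 1 := by
    simp only [mul_right, inv_right]
    rw [hcomm a.right b.right]
    group
  have hl : (a * b * a⁻¹ * b⁻¹).left
      = a.left * φ a.right b.left * (φ b.right a.left)⁻¹ * b.left⁻¹ := by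
    have key : ∀ (x y : G) (n : N), (φ x) ((φ y) ((φ x)⁻¹ n)) = φ y n := by
      intro x y n
      rw [← map_inv, ← MulAut.mul_apply, ← MulAut.mul_apply, ← map_mul, ← map_mul]
      have : x * y * x⁻¹ = y := by rw [hcomm x y]; group
      rw [this]
    simp only [mul_left, inv_left, mul_right, inv_right, map_mul, map_inv, MulAut.mul_apply]
    simp only [key, MulAut.apply_inv_self]
  ext
  · rw [commutatorElement_def, hl, left_inl]
  · rw [commutatorElement_def, hr, right_inl]

variable (p : ℕ)

lemma shiftHom_apply (s : Multiplicative (ZMod p)) (v : WreathBase p) :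
    shiftHom p s v = fun i => v (i + s.toAdd) := rfl

/-- The multiplicative difference homomorphism on the base. -/
def D : WreathBase p →* WreathBase p where
  toFun f := fun i => f (i + 1) * (f i)⁻¹
  map_one' := by funext i; simp
  map_mul' f g := by
    funext i
    show f (i+1) * g (i+1) * (f i * g i)⁻¹ = (f (i+1) * (f i)⁻¹) * (g (i+1) * (g i)⁻¹)
    simp [mul_inv, mul_comm, mul_assoc, mul_left_comm]

lemma D_apply (v : WreathBase p) (i : ZMod p) : D p v i = v (i + 1) * (v i)⁻¹ := rfl

/-- Iterates of `D`. -/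
def Dk : ℕ → (WreathBase p →* WreathBase p)
  | 0 => MonoidHom.id _
  | (k+1) => (Dk k).comp (D p)

lemma D_shift (s : ZMod p) (v : WreathBase p) :
    D p (fun i => v (i + s)) = fun i => D p v (i + s) := by
  funext i
  show v (i + 1 + s) * (v (i + s))⁻¹ = v (i + s + 1) * (v (i + s))⁻¹
  rw [add_right_comm]

lemma Dk_shift (k : ℕ) (s : ZMod p) (v : WreathBase p) :
    Dk p k (fun i => v (i + s)) = fun i => Dk p k v (i + s) := by
  induction k generalizing v with
  | zero => rfl
  | succ k ih =>
    show Dk p k (D p fun i => v (i + s)) = _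
    rw [D_shift, ih]
    rfl

lemma D_prodShift (m : ℕ) (u : WreathBase p) :
    D p (fun i => ∏ j ∈ Finset.range m, u (i + j)) =
      fun i => u (i + (m : ZMod p)) * (u i)⁻¹ := by
  induction m with
  | zero => funext i; simp [D_apply]
  | succ m ih =>
    have h : (fun i => ∏ j ∈ Finset.range (m+1), u (i + j)) =
        (fun i => ∏ j ∈ Finset.range m, u (i + j)) * (fun i => u (i + (m : ZMod p))) := by
      funext i
      simp [Finset.prod_range_succ, Pi.mul_apply]
    rw [h, map_mul, ih]
    funext i
    simp only [Pi.mul_apply, D_apply]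
    push_cast
    rw [← add_assoc]
    apply Multiplicative.toAdd.injective
    simp only [toAdd_mul, toAdd_inv]
    abel

lemma shift_mem_range [NeZero p] (k : ℕ) (s : ZMod p) (v : WreathBase p)
    (hv : v ∈ (Dk p k).range) :
    (fun i => v (i + s)) * v⁻¹ ∈ (Dk p (k+1)).range := by
  obtain ⟨u, rfl⟩ := hv
  refine ⟨fun i => ∏ j ∈ Finset.range s.val, u (i + j), ?_⟩
  show Dk p k (D p _) = _
  rw [D_prodShift]
  have hs : ((s.val : ℕ) : ZMod p) = s := ZMod.natCast_val s |>.trans (ZMod.cast_id p s)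
  rw [hs]
  have : (fun i => u (i + s) * (u i)⁻¹) =
      (fun i => u (i + s)) * u⁻¹ := rfl
  rw [this, map_mul, map_inv, Dk_shift]

/-- The filtration subgroups. -/
def A (k : ℕ) : Subgroup (WreathProductCpCp p) :=
  ((Dk p k).range).map inl

lemma lcs_le [NeZero p] (k : ℕ) :
    (⊤ : Subgroup (WreathProductCpCp p)).lowerCentralSeries (k+1) ≤ A p (k+1) := by
  induction k with
  | zero =>
    rw [Subgroup.lowerCentralSeries_succ]
    refine (Subgroup.closure_le _).2 ?_
    rintro x ⟨a, -, b, -, rfl⟩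
    rw [comm_formula (shiftHom p) mul_comm a b]
    refine Subgroup.mem_map.2 ⟨_, ?_, rfl⟩
    have hab : a.left * shiftHom p a.right b.left * (shiftHom p b.right a.left)⁻¹ * b.left⁻¹
        = ((fun i => a.left (i + b.right.toAdd)) * a.left⁻¹)⁻¹ *
          ((fun i => b.left (i + a.right.toAdd)) * b.left⁻¹) := by
      funext i
      simp only [shiftHom_apply, Pi.mul_apply, Pi.inv_apply]
      apply Multiplicative.toAdd.injective
      simp only [toAdd_mul, toAdd_inv]
      abel
    rw [hab]
    exact mul_mem (inv_mem (shift_mem_range p 0 _ a.left ⟨a.left, rfl⟩))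
      (shift_mem_range p 0 _ b.left ⟨b.left, rfl⟩)
  | succ k ih =>
    rw [Subgroup.lowerCentralSeries_succ]
    refine (Subgroup.closure_le _).2 ?_
    rintro x ⟨a, ha, b, -, rfl⟩
    obtain ⟨v, hv, rfl⟩ := Subgroup.mem_map.1 (ih ha)
    rw [comm_formula (shiftHom p) mul_comm _ b]
    refine Subgroup.mem_map.2 ⟨_, ?_, rfl⟩
    have hab : (inl v : WreathProductCpCp p).left *
          shiftHom p (inl v : WreathProductCpCp p).right b.left *
          (shiftHom p b.right (inl v : WreathProductCpCp p).left)⁻¹ * b.left⁻¹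
        = ((fun i => v (i + b.right.toAdd)) * v⁻¹)⁻¹ := by
      rw [left_inl, right_inl, map_one]
      funext i
      simp only [shiftHom_apply, Pi.mul_apply, Pi.inv_apply, MulAut.one_apply]
      apply Multiplicative.toAdd.injective
      simp only [toAdd_mul, toAdd_inv]
      abel
    rw [hab]
    exact inv_mem (shift_mem_range p (k+1) _ v hv)

/-- Additive shift endomorphism. -/
def S : AddMonoid.End (ZMod p → ZMod p) where
  toFun f := fun i => f (i + 1)
  map_zero' := rfl
  map_add' _ _ := rfl

lemma S_pow_apply (k : ℕ) (f : ZMod p → ZMod p) (i : ZMod p) :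
    ((S p)^k) f i = f (i + (k : ZMod p)) := by
  induction k generalizing f with
  | zero => simp [AddMonoid.End.one_apply]
  | succ k ih =>
    rw [pow_succ]
    show ((S p)^k) ((S p) f) i = _
    rw [ih]
    show f (i + (k : ZMod p) + 1) = _
    congr 1
    push_cast
    ring

lemma charP_end [NeZero p] : CharP (AddMonoid.End (ZMod p → ZMod p)) p := by
  constructor
  intro n
  constructor
  · intro h
    have h1 : ((n : AddMonoid.End (ZMod p → ZMod p)) (fun _ => (1 : ZMod p))) 0 = 0 := by
      rw [h]; rfl
    rw [AddMonoid.End.natCast_apply, Pi.smul_apply, nsmul_eq_mul, mul_one] at h1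
    exact (ZMod.natCast_eq_zero_iff n p).mp h1
  · intro h
    refine AddMonoid.End.ext _ fun f => funext fun i => ?_
    rw [AddMonoid.End.natCast_apply, Pi.smul_apply, nsmul_eq_mul]
    have : (n : ZMod p) = 0 := (ZMod.natCast_eq_zero_iff n p).mpr h
    rw [this, zero_mul]
    rfl

lemma E_pow_p [Fact p.Prime] : (S p - 1)^p = 0 := by
  haveI := charP_end p
  rw [sub_pow_char_of_commute _ (Commute.one_right _), one_pow, sub_eq_zero]
  refine AddMonoid.End.ext _ fun f => funext fun i => ?_
  rw [S_pow_apply, ZMod.natCast_self, add_zero]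
  rfl

lemma toAdd_Dk (k : ℕ) (u : WreathBase p) (i : ZMod p) :
    (Dk p k u i).toAdd = (((S p - 1)^k) (fun j => (u j).toAdd)) i := by
  induction k generalizing u with
  | zero => rfl
  | succ k ih =>
    show (Dk p k (D p u) i).toAdd = _
    rw [ih (D p u)]
    have hD : (fun j => ((D p u) j).toAdd) = (S p - 1) (fun j => (u j).toAdd) := by
      funext j
      show ((u (j+1)) * (u j)⁻¹).toAdd = _
      show _ = ((S p) (fun j => (u j).toAdd) - (1 : AddMonoid.End (ZMod p → ZMod p)) (fun j => (u j).toAdd)) j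
      rw [Pi.sub_apply, sub_eq_add_neg]
      simp only [toAdd_mul, toAdd_inv]
      rfl
    rw [hD]
    have : ((S p - 1)^k) ((S p - 1) (fun j => (u j).toAdd))
        = ((S p - 1)^(k+1)) (fun j => (u j).toAdd) := by
      rw [pow_succ]
      rfl
    rw [this]

lemma Dk_p_eq_one [Fact p.Prime] (u : WreathBase p) : Dk p p u = 1 := by
  funext i
  apply Multiplicative.toAdd.injective
  rw [toAdd_Dk, E_pow_p]
  rfl

/-- The element sequence witnessing nontriviality of the lower central series. -/
def vseq : ℕ → WreathBase p
  | 0 => fun i => if i = 0 then Multiplicative.ofAdd 1 else 1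
  | (k+1) => vseq k * (shiftHom p (Multiplicative.ofAdd 1) (vseq k))⁻¹

lemma vseq_succ_apply (k : ℕ) (i : ZMod p) :
    vseq p (k+1) i = vseq p k i * (vseq p k (i + 1))⁻¹ := by
  show vseq p k i * ((shiftHom p (Multiplicative.ofAdd 1) (vseq p k)) i)⁻¹ = _
  rw [shiftHom_apply]
  simp

lemma vseq_mem (k : ℕ) :
    (inl (vseq p k) : WreathProductCpCp p) ∈
      (⊤ : Subgroup (WreathProductCpCp p)).lowerCentralSeries k := by
  induction k with
  | zero => exact Subgroup.mem_top _
  | succ k ih =>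
    rw [Subgroup.lowerCentralSeries_succ]
    apply Subgroup.subset_closure
    refine ⟨inl (vseq p k), ih, inr (Multiplicative.ofAdd 1), Subgroup.mem_top _, ?_⟩
    have h1 : (inl (vseq p k) : WreathProductCpCp p)⁻¹ = inl (vseq p k)⁻¹ :=
      (map_inv inl (vseq p k)).symm
    rw [commutatorElement_def, h1, mul_assoc, mul_assoc, ← mul_assoc (inr (Multiplicative.ofAdd 1)),
      ← map_inv inr,
      ← inl_aut (φ := shiftHom p) (Multiplicative.ofAdd 1) (vseq p k)⁻¹, ← map_mul]
    show inl (vseq p k * (shiftHom p (Multiplicative.ofAdd 1)) (vseq p k)⁻¹) = _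
    rw [map_inv]
    rfl

lemma vseq_spec [Fact p.Prime] (k : ℕ) (hk : k < p) :
    vseq p k (-(k : ZMod p)) = Multiplicative.ofAdd ((-1 : ZMod p)^k) ∧
    ∀ m : ℕ, k < m → m < p → vseq p k (-(m : ZMod p)) = 1 := by
  induction k with
  | zero =>
    constructor
    · show (if -((0:ℕ) : ZMod p) = 0 then Multiplicative.ofAdd (1 : ZMod p) else 1) = _
      rw [if_pos (by push_cast; ring)]
      norm_num
    · intro m hm hmp
      show (if -((m:ℕ) : ZMod p) = 0 then Multiplicative.ofAdd (1 : ZMod p) else 1) = 1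
      rw [if_neg]
      rw [neg_eq_zero]
      intro hc
      have := (ZMod.natCast_eq_zero_iff m p).mp hc
      have := Nat.le_of_dvd hm this
      omega
  | succ k ih =>
    obtain ⟨ih1, ih2⟩ := ih (by omega)
    constructor
    · rw [vseq_succ_apply]
      have harith : -(((k+1:ℕ)) : ZMod p) + 1 = -((k:ℕ) : ZMod p) := by push_cast; ring
      rw [harith, ih1, ih2 (k+1) (by omega) hk, one_mul]
      rw [← ofAdd_neg]
      congr 1
      rw [pow_succ]
      ring
    · intro m hm hmp
      rw [vseq_succ_apply]
      have h1 : vseq p k (-((m:ℕ) : ZMod p)) = 1 := ih2 m (by omega) hmp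
      have harith : -((m:ℕ) : ZMod p) + 1 = -(((m-1:ℕ)) : ZMod p) := by
        have : (1:ℕ) ≤ m := by omega
        push_cast [Nat.cast_sub this]
        ring
      rw [h1, harith, ih2 (m-1) (by omega) (by omega), one_mul, inv_one]

/-- The projection virtual endomorphism. -/
def phi : ((rightHom : WreathProductCpCp p →* Multiplicative (ZMod p)).ker) →*
    WreathProductCpCp p where
  toFun x := inr (x.1.left 0)
  map_one' := by
    show (inr ((1 : WreathProductCpCp p).left 0) : WreathProductCpCp p) = 1
    rw [one_left]
    exact map_one inr
  map_mul' a b := by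
    have ha : a.1.right = 1 := a.2
    show (inr ((a.1 * b.1).left 0) : WreathProductCpCp p) = inr (a.1.left 0) * inr (b.1.left 0)
    rw [mul_left, ha, map_one, ← map_mul]
    congr 1

end Stmt14Aux

theorem stmt14 (p : ℕ) (hp : p.Prime) :
    Nat.card (WreathProductCpCp p) = p ^ (p + 1) ∧
    -- maximal class: nilpotency class is `p = (p+1) - 1`
    (⊤ : Subgroup (WreathProductCpCp p)).lowerCentralSeries p = ⊥ ∧
    (⊤ : Subgroup (WreathProductCpCp p)).lowerCentralSeries (p - 1) ≠ ⊥ ∧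
    -- self-similarity: a simple virtual endomorphism from a maximal subgroup
    ∃ (H : Subgroup (WreathProductCpCp p)) (φ : H →* WreathProductCpCp p),
      H.index = p ∧ IsSimpleVirtualEndo H φ := by
  haveI hf : Fact p.Prime := ⟨hp⟩
  haveI : NeZero p := ⟨hp.pos.ne'⟩
  open SemidirectProduct Stmt14Aux in
  have hcardQ : Nat.card (Multiplicative (ZMod p)) = p := by
    rw [Nat.card_congr Multiplicative.toAdd, Nat.card_zmod]
  refine ⟨?_, ?_, ?_, ?_⟩
  · have e : WreathProductCpCp p ≃ (WreathBase p × Multiplicative (ZMod p)) :=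
      ⟨fun x => (x.left, x.right), fun y => ⟨y.1, y.2⟩, fun _ => rfl, fun _ => rfl⟩
    rw [Nat.card_congr e, Nat.card_prod]
    have h2 : Nat.card (WreathBase p) = p ^ p := by
      rw [Nat.card_fun, hcardQ, Nat.card_zmod]
    rw [hcardQ, h2, pow_succ]
  · apply le_bot_iff.mp
    have hple : (⊤ : Subgroup (WreathProductCpCp p)).lowerCentralSeries p ≤ Stmt14Aux.A p p := by
      have h := Stmt14Aux.lcs_le p (p-1)
      have hp1 : p - 1 + 1 = p := Nat.succ_pred_eq_of_pos hp.pos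
      rwa [hp1] at h
    refine le_trans hple ?_
    intro x hx
    obtain ⟨v, ⟨u, rfl⟩, rfl⟩ := Subgroup.mem_map.1 hx
    rw [Stmt14Aux.Dk_p_eq_one p u, map_one]
    exact Subgroup.one_mem ⊥
  · intro hbot
    have hmem := Stmt14Aux.vseq_mem p (p-1)
    rw [hbot] at hmem
    have h1 : Stmt14Aux.vseq p (p-1) = 1 := by
      apply SemidirectProduct.inl_injective (φ := shiftHom p)
      rw [map_one]
      exact Subgroup.mem_bot.mp hmem
    have spec := (Stmt14Aux.vseq_spec p (p-1) (Nat.sub_lt hp.pos one_pos)).1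
    rw [h1] at spec
    have h2 : (0 : ZMod p) = (-1 : ZMod p)^(p-1) :=
      Multiplicative.ofAdd.injective spec
    exact (pow_ne_zero (p-1) (neg_ne_zero.mpr (one_ne_zero (α := ZMod p)))) h2.symm
  · refine ⟨(SemidirectProduct.rightHom :
        WreathProductCpCp p →* Multiplicative (ZMod p)).ker, Stmt14Aux.phi p, ?_, ?_⟩
    · rw [Subgroup.index_ker, MonoidHom.range_eq_top.mpr SemidirectProduct.rightHom_surjective,
        Subgroup.card_top, hcardQ]
    · intro K hKH hKnorm hKinv
      rw [Subgroup.eq_bot_iff_forall]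
      intro x hx
      have hxr : x.right = 1 := hKH hx
      have hxeq : x = SemidirectProduct.inl x.left := by
        ext
        · rw [SemidirectProduct.left_inl]
        · rw [SemidirectProduct.right_inl, hxr]
      have hxl : ∀ i : ZMod p, x.left i = 1 := by
        intro i
        have hy : SemidirectProduct.inr (Multiplicative.ofAdd i) * x *
            (SemidirectProduct.inr (Multiplicative.ofAdd i))⁻¹ ∈ K :=
          hKnorm.conj_mem x hx _
        have hconj : SemidirectProduct.inr (Multiplicative.ofAdd i) * x *
            (SemidirectProduct.inr (Multiplicative.ofAdd i))⁻¹
            = SemidirectProduct.inl (shiftHom p (Multiplicative.ofAdd i) x.left) := by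
          nth_rewrite 1 [hxeq]
          rw [← map_inv SemidirectProduct.inr, ← SemidirectProduct.inl_aut]
        rw [hconj] at hy
        have hyH : SemidirectProduct.inl (shiftHom p (Multiplicative.ofAdd i) x.left) ∈
            (SemidirectProduct.rightHom :
              WreathProductCpCp p →* Multiplicative (ZMod p)).ker := hKH hy
        have hmem : Stmt14Aux.phi p ⟨_, hyH⟩ ∈
            Subgroup.map (Stmt14Aux.phi p) (K.subgroupOf _) :=
          Subgroup.mem_map.2 ⟨⟨_, hyH⟩, Subgroup.mem_subgroupOf.mpr hy, rfl⟩
        have hK2 := hKinv hmem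
        have hH2 := hKH hK2
        have hc : (shiftHom p (Multiplicative.ofAdd i) x.left) 0 = 1 := by
          have h3 := MonoidHom.mem_ker.mp hH2
          have h4 : Stmt14Aux.phi p ⟨_, hyH⟩
              = SemidirectProduct.inr ((shiftHom p (Multiplicative.ofAdd i) x.left) 0) := by
            show SemidirectProduct.inr (_ : Multiplicative (ZMod p)) = _
            rw [SemidirectProduct.left_inl]
          rw [h4, SemidirectProduct.rightHom_inr] at h3
          exact h3
        have : x.left (0 + i) = 1 := hc
        simpa using this
      rw [hxeq, funext hxl]
      exact map_one SemidirectProduct.inl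
end

section
/- Let G be a finite p-group of maximal class of order p^n ≥ p^4 with degree of commutativity ℓ(G) = 0 (i.e., C_G(γ_{n−2}(G)) ≠ G_1). Then there is no simple virtual endomorphism φ : G_1 → G. -/
open Subgroup Pointwise

private lemma aux_three {G : Type*} [Group G] {H K L N : Subgroup G} [N.Normal]
    (h1 : ⁅⁅K, L⁆, H⁆ ≤ N) (h2 : ⁅⁅L, H⁆, K⁆ ≤ N) : ⁅⁅H, K⁆, L⁆ ≤ N := by
  rw [← QuotientGroup.ker_mk' N, ← Subgroup.map_eq_bot_iff] at h1 h2 ⊢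
  rw [Subgroup.map_commutator, Subgroup.map_commutator] at h1 h2 ⊢
  exact Subgroup.commutator_commutator_eq_bot_of_rotate h1 h2

private lemma lcs_succ' {G : Type*} [Group G] (k : ℕ) :
    Subgroup.lowerCentralSeries (⊤ : Subgroup G) (k + 1) = ⁅Subgroup.lowerCentralSeries (⊤ : Subgroup G) k, ⊤⁆ := rfl

private lemma lcs_comm {G : Type*} [Group G] :
    ∀ j i : ℕ, ⁅Subgroup.lowerCentralSeries (⊤ : Subgroup G) i, Subgroup.lowerCentralSeries (⊤ : Subgroup G) j⁆ ≤ Subgroup.lowerCentralSeries (⊤ : Subgroup G) (i + j + 1)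
  | 0, i => by
      rw [Subgroup.lowerCentralSeries_zero]
      exact le_of_eq (lcs_succ' i).symm
  | (j+1), i => by
      rw [lcs_succ' j, Subgroup.commutator_comm]
      apply aux_three
      · have h := lcs_comm (G := G) j (i + 1)
        rw [show i + 1 + j + 1 = i + (j + 1) + 1 by omega] at h
        calc ⁅⁅(⊤ : Subgroup G), Subgroup.lowerCentralSeries (⊤ : Subgroup G) i⁆, Subgroup.lowerCentralSeries (⊤ : Subgroup G) j⁆
            = ⁅⁅Subgroup.lowerCentralSeries (⊤ : Subgroup G) i, (⊤ : Subgroup G)⁆, Subgroup.lowerCentralSeries (⊤ : Subgroup G) j⁆ := by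
              rw [Subgroup.commutator_comm (⊤ : Subgroup G) (Subgroup.lowerCentralSeries (⊤ : Subgroup G) i)]
          _ = ⁅Subgroup.lowerCentralSeries (⊤ : Subgroup G) (i + 1), Subgroup.lowerCentralSeries (⊤ : Subgroup G) j⁆ := by rw [← lcs_succ' i]
          _ ≤ Subgroup.lowerCentralSeries (⊤ : Subgroup G) (i + (j + 1) + 1) := h
      · calc ⁅⁅Subgroup.lowerCentralSeries (⊤ : Subgroup G) i, Subgroup.lowerCentralSeries (⊤ : Subgroup G) j⁆, ⊤⁆
            ≤ ⁅Subgroup.lowerCentralSeries (⊤ : Subgroup G) (i + j + 1), ⊤⁆ :=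
              Subgroup.commutator_mono (lcs_comm (G := G) j i) le_rfl
          _ = Subgroup.lowerCentralSeries (⊤ : Subgroup G) (i + j + 2) := (lcs_succ' _).symm
          _ ≤ Subgroup.lowerCentralSeries (⊤ : Subgroup G) (i + (j + 1) + 1) :=
              Subgroup.lowerCentralSeries_antitone _ (by omega)

private lemma aux_center {p : ℕ} [Fact p.Prime] {H : Type*} [Group H] [Finite H]
    (hH : IsPGroup p H) (N : Subgroup H) [nN : N.Normal] (hN : N ≠ ⊥) :
    ∃ z : H, z ∈ N ∧ z ≠ 1 ∧ z ∈ Subgroup.center H := by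
  have hCA : IsPGroup p (ConjAct H) := hH.of_equiv ConjAct.toConjAct
  have hdvd : p ∣ Nat.card N := by
    obtain ⟨k, hk⟩ := IsPGroup.iff_card.mp (hH.to_subgroup N)
    rcases k with _ | k
    · exact absurd (Subgroup.eq_bot_of_card_eq _ (by simpa using hk)) hN
    · rw [hk]; exact dvd_pow_self p (Nat.succ_ne_zero k)
  have hfix : (1 : N) ∈ MulAction.fixedPoints (ConjAct H) N := by
    intro g; exact smul_one g
  obtain ⟨b, hbf, hb1⟩ :=
    hCA.exists_fixed_point_of_prime_dvd_card_of_fixed_point (α := N) hdvd hfix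
  refine ⟨(b : H), b.2, ?_, ?_⟩
  · intro h
    apply hb1
    exact (Subtype.ext (by simpa using h.symm : ((1:N):H) = (b:H)))
  · rw [Subgroup.mem_center_iff]
    intro g
    have h := hbf (ConjAct.toConjAct g)
    have h2 : g * (b : H) * g⁻¹ = (b : H) := by
      have := congrArg (Subtype.val) h
      rwa [ConjAct.Subgroup.val_conj_smul, ConjAct.toConjAct_smul] at this
    calc g * (b:H) = (g * b * g⁻¹) * g := by group
      _ = (b : H) * g := by rw [h2]

open scoped commutatorElement

theorem stmt16 {p n : ℕ} (hp : p.Prime) {G : Type} [Group G] [Finite G]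
    (hcard : Nat.card G = p ^ n) (hn : 4 ≤ n)
    -- `G` has maximal class, i.e. nilpotency class exactly `n - 1`
    (hmc₁ : Subgroup.lowerCentralSeries (⊤ : Subgroup G) (n - 1) = ⊥) (hmc₂ : Subgroup.lowerCentralSeries (⊤ : Subgroup G) (n - 2) ≠ ⊥)
    -- `G1 = C_G(γ₂(G)/γ₄(G))`
    (G1 : Subgroup G)
    (hG1 : ∀ g : G, g ∈ G1 ↔
      ∀ x ∈ Subgroup.lowerCentralSeries (⊤ : Subgroup G) 1, ⁅g, x⁆ ∈ Subgroup.lowerCentralSeries (⊤ : Subgroup G) 3)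
    -- degree of commutativity 0: `C_G(γ_{n-2}(G)) ≠ G_1`
    (hl : Subgroup.centralizer (Subgroup.lowerCentralSeries (⊤ : Subgroup G) (n - 3) : Set G) ≠ G1) :
    ∀ φ : G1 →* G, ¬ IsSimpleVirtualEndo G1 φ := by
  intro φ hs
  haveI : Fact p.Prime := ⟨hp⟩
  have hp1 : 1 < p := hp.one_lt
  have hpG : IsPGroup p G := IsPGroup.of_card hcard
  have hanti : ∀ {a b : ℕ}, a ≤ b → Subgroup.lowerCentralSeries (⊤ : Subgroup G) b ≤ Subgroup.lowerCentralSeries (⊤ : Subgroup G) a :=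
    fun h => Subgroup.lowerCentralSeries_antitone _ h
  have hnebot : ∀ k, k ≤ n - 2 → Subgroup.lowerCentralSeries (⊤ : Subgroup G) k ≠ ⊥ := by
    intro k hk h
    exact hmc₂ (le_bot_iff.mp (h ▸ hanti hk))
  have hstrict : ∀ k, k ≤ n - 2 → Subgroup.lowerCentralSeries (⊤ : Subgroup G) (k + 1) < Subgroup.lowerCentralSeries (⊤ : Subgroup G) k := by
    intro k hk
    refine lt_of_le_of_ne (hanti (Nat.le_succ k)) (fun h => ?_)
    have hconst : ∀ j, Subgroup.lowerCentralSeries (⊤ : Subgroup G) (k + j) = Subgroup.lowerCentralSeries (⊤ : Subgroup G) k := by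
      intro j; induction j with
      | zero => rfl
      | succ j ih =>
          calc Subgroup.lowerCentralSeries (⊤ : Subgroup G) (k + (j + 1)) = ⁅Subgroup.lowerCentralSeries (⊤ : Subgroup G) (k + j), ⊤⁆ := rfl
            _ = ⁅Subgroup.lowerCentralSeries (⊤ : Subgroup G) k, ⊤⁆ := by rw [ih]
            _ = Subgroup.lowerCentralSeries (⊤ : Subgroup G) k := h
    have hb : Subgroup.lowerCentralSeries (⊤ : Subgroup G) k = ⊥ := by
      have h2 := hconst (n - 1 - k)
      rw [show k + (n - 1 - k) = n - 1 by omega] at h2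
      rw [← h2, hmc₁]
    exact hnebot k hk hb
  -- cards of the lower central series
  have hpow : ∀ k : ℕ, ∃ e, Nat.card (Subgroup.lowerCentralSeries (⊤ : Subgroup G) k) = p ^ e := fun k =>
    IsPGroup.iff_card.mp (hpG.to_subgroup (Subgroup.lowerCentralSeries (⊤ : Subgroup G) k))
  choose e he using hpow
  have hpowinj : ∀ {a b : ℕ}, p ^ a = p ^ b → a = b := fun h =>
    Nat.pow_right_injective hp.two_le h
  have he0 : e 0 = n := by
    apply hpowinj
    rw [← he 0, Subgroup.lowerCentralSeries_zero, Subgroup.card_top, hcard]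
  have helast : e (n - 1) = 0 := by
    apply hpowinj
    rw [← he (n - 1), hmc₁, Subgroup.card_bot, pow_zero]
  have hcard_lt : ∀ {A B : Subgroup G}, A < B → Nat.card A < Nat.card B := by
    intro A B hAB
    rcases (Subgroup.card_le_of_le hAB.le).lt_or_eq with h | h
    · exact h
    · exact absurd (Subgroup.eq_of_le_of_card_ge hAB.le h.ge) hAB.ne
  have hedec : ∀ k, k ≤ n - 2 → e (k + 1) < e k := by
    intro k hk
    have hlt := hcard_lt (hstrict k hk)
    rw [he, he] at hlt
    exact (Nat.pow_lt_pow_iff_right hp1).mp hlt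
  have hchain : ∀ d a, a + d ≤ n - 1 → e (a + d) + d ≤ e a := by
    intro d
    induction d with
    | zero => intro a _; simp
    | succ d ih =>
        intro a ha
        have h1 : e (a + d + 1) < e (a + d) := hedec (a + d) (by omega)
        have h2 := ih a (by omega)
        have h3 : a + (d + 1) = a + d + 1 := rfl
        rw [h3]
        omega
  have he1 : e 1 ≤ n - 2 := by
    have hlt : e 1 < n := he0 ▸ hedec 0 (by omega)
    by_contra hcon
    have he1' : e 1 = n - 1 := by omega
    -- index p abelianization: contradiction
    have hq : Nat.card (G ⧸ Subgroup.lowerCentralSeries (⊤ : Subgroup G) 1) = p := by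
      have h := Subgroup.card_eq_card_quotient_mul_card_subgroup (Subgroup.lowerCentralSeries (⊤ : Subgroup G) 1)
      rw [hcard, he 1, he1'] at h
      have h2 : p ^ n = p ^ (n - 1) * p := by rw [← pow_succ]; congr 1; omega
      rw [h2] at h
      have hp0 : 0 < p ^ (n - 1) := Nat.pow_pos hp.pos
      rw [mul_comm (Nat.card (G ⧸ Subgroup.lowerCentralSeries (⊤ : Subgroup G) 1)) (p ^ (n - 1))] at h
      exact (Nat.eq_of_mul_eq_mul_left hp0 h).symm
    haveI : IsCyclic (G ⧸ Subgroup.lowerCentralSeries (⊤ : Subgroup G) 1) := isCyclic_of_prime_card hq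
    have hle12 : Subgroup.lowerCentralSeries (⊤ : Subgroup G) 2 ≤ Subgroup.lowerCentralSeries (⊤ : Subgroup G) 1 := hanti (by omega)
    let f : (G ⧸ Subgroup.lowerCentralSeries (⊤ : Subgroup G) 2) →* (G ⧸ Subgroup.lowerCentralSeries (⊤ : Subgroup G) 1) :=
      QuotientGroup.map _ _ (MonoidHom.id G) (by simpa using hle12)
    have hker : f.ker ≤ Subgroup.center (G ⧸ Subgroup.lowerCentralSeries (⊤ : Subgroup G) 2) := by
      intro q hq'
      induction q using QuotientGroup.induction_on with
      | H g =>
        have hg : g ∈ Subgroup.lowerCentralSeries (⊤ : Subgroup G) 1 := by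
          rw [MonoidHom.mem_ker] at hq'
          have : ((g : G ⧸ Subgroup.lowerCentralSeries (⊤ : Subgroup G) 1)) = 1 := hq'
          exact (QuotientGroup.eq_one_iff g).mp this
        rw [Subgroup.mem_center_iff]
        intro q'
        induction q' using QuotientGroup.induction_on with
        | H h =>
          show ((h * g : G) : G ⧸ Subgroup.lowerCentralSeries (⊤ : Subgroup G) 2) = ((g * h : G) : _)
          rw [QuotientGroup.eq]
          have : (h * g)⁻¹ * (g * h) = ⁅g⁻¹, h⁻¹⁆ := by group
          rw [this]
          have hmem : ⁅g⁻¹, h⁻¹⁆ ∈ Subgroup.lowerCentralSeries (⊤ : Subgroup G) 2 := by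
            rw [lcs_succ' (G := G) 1]
            exact Subgroup.commutator_mem_commutator (inv_mem hg) (Subgroup.mem_top _)
          exact hmem
    have hcomm := commutative_of_cyclic_center_quotient f hker
    have hle : Subgroup.lowerCentralSeries (⊤ : Subgroup G) 1 ≤ Subgroup.lowerCentralSeries (⊤ : Subgroup G) 2 := by
      have h1 : Subgroup.lowerCentralSeries (⊤ : Subgroup G) 1 = ⁅(⊤ : Subgroup G), ⊤⁆ := rfl
      rw [h1, Subgroup.commutator_le]
      intro g1 _ g2 _
      rw [← QuotientGroup.ker_mk' (Subgroup.lowerCentralSeries (⊤ : Subgroup G) 2), MonoidHom.mem_ker,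
        map_commutatorElement, commutatorElement_eq_one_iff_mul_comm]
      exact hcomm _ _
    exact (hstrict 1 (by omega)).not_ge hle
  have hA : ∀ k, 1 ≤ k → k ≤ n - 1 → Nat.card (Subgroup.lowerCentralSeries (⊤ : Subgroup G) k) = p ^ (n - 1 - k) := by
    intro k h1k hk
    rw [he k]
    congr 1
    have hub : e k ≤ n - 1 - k := by
      have h := hchain (k - 1) 1 (by omega)
      rw [show 1 + (k - 1) = k by omega] at h
      omega
    have hlb : n - 1 - k ≤ e k := by
      have h := hchain (n - 1 - k) k (by omega)
      rw [show k + (n - 1 - k) = n - 1 by omega] at h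
      omega
    omega

  -- the subgroup K = γ_{n-1}(G) in classical numbering: central of order p
  have hKcard : Nat.card (Subgroup.lowerCentralSeries (⊤ : Subgroup G) (n - 2)) = p := by
    rw [hA (n - 2) (by omega) (by omega), show n - 1 - (n - 2) = 1 by omega, pow_one]
  have hKcent : ∀ z ∈ Subgroup.lowerCentralSeries (⊤ : Subgroup G) (n - 2), ∀ g : G, g * z = z * g := by
    intro z hz g
    have hmem : ⁅z, g⁆ ∈ Subgroup.lowerCentralSeries (⊤ : Subgroup G) (n - 1) := by
      rw [show n - 1 = (n - 2) + 1 by omega, lcs_succ' (G := G) (n - 2)]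
      exact Subgroup.commutator_mem_commutator hz (Subgroup.mem_top g)
    rw [hmc₁] at hmem
    have h1 : ⁅z, g⁆ = 1 := Subgroup.mem_bot.mp hmem
    exact (commutatorElement_eq_one_iff_mul_comm.mp h1).symm
  have hcentG1 : ∀ z : G, (∀ g : G, g * z = z * g) → z ∈ G1 := by
    intro z hz
    rw [hG1]
    intro x _
    rw [commutatorElement_eq_one_iff_mul_comm.mpr (hz x).symm]
    exact one_mem _
  have hKleG1 : Subgroup.lowerCentralSeries (⊤ : Subgroup G) (n - 2) ≤ G1 := fun z hz => hcentG1 z (hKcent z hz)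
  haveI hG1n : G1.Normal := by
    constructor
    intro g hg c
    rw [hG1] at hg ⊢
    intro x hx
    have hx' : c⁻¹ * x * c ∈ Subgroup.lowerCentralSeries (⊤ : Subgroup G) 1 := by
      have := (Subgroup.lowerCentralSeries_normal (⊤ : Subgroup G) 1).conj_mem x hx c⁻¹
      simpa using this
    have h1 : ⁅c * g * c⁻¹, x⁆ = c * ⁅g, c⁻¹ * x * c⁆ * c⁻¹ := by group
    rw [h1]
    exact (Subgroup.lowerCentralSeries_normal (⊤ : Subgroup G) 3).conj_mem _ (hg _ hx') c
  have hL1G1 : Subgroup.lowerCentralSeries (⊤ : Subgroup G) 1 ≤ G1 := by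
    intro a ha
    rw [hG1]
    intro x hx
    exact lcs_comm (G := G) 1 1 (Subgroup.commutator_mem_commutator ha hx)
  have hG1netop : G1 ≠ ⊤ := by
    intro htop
    have hle : Subgroup.lowerCentralSeries (⊤ : Subgroup G) 2 ≤ Subgroup.lowerCentralSeries (⊤ : Subgroup G) 3 := by
      rw [lcs_succ' (G := G) 1, Subgroup.commutator_le]
      intro g1 hg1 g2 _
      have hg2 : g2 ∈ G1 := htop ▸ Subgroup.mem_top g2
      have h3 : ⁅g2, g1⁆ ∈ Subgroup.lowerCentralSeries (⊤ : Subgroup G) 3 := (hG1 g2).mp hg2 g1 hg1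
      have h4 := (Subgroup.lowerCentralSeries (⊤ : Subgroup G) 3).inv_mem h3
      rwa [commutatorElement_inv] at h4
    exact (hstrict 2 (by omega)).not_ge hle
  -- pick a generator of γ₂ mod γ₃
  obtain ⟨x₀, hx₀1, hx₀2⟩ := SetLike.exists_of_lt (hstrict 1 (by omega))
  have hcomL2 : ∀ (g x : G), x ∈ Subgroup.lowerCentralSeries (⊤ : Subgroup G) 1 → ⁅g, x⁆ ∈ Subgroup.lowerCentralSeries (⊤ : Subgroup G) 2 := by
    intro g x hx
    have h1 : ⁅x, g⁆ ∈ Subgroup.lowerCentralSeries (⊤ : Subgroup G) 2 := by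
      rw [lcs_succ' (G := G) 1]
      exact Subgroup.commutator_mem_commutator hx (Subgroup.mem_top g)
    have h2 := (Subgroup.lowerCentralSeries (⊤ : Subgroup G) 2).inv_mem h1
    rwa [commutatorElement_inv] at h2
  have hcomL3 : ∀ (g x : G), x ∈ Subgroup.lowerCentralSeries (⊤ : Subgroup G) 2 → ⁅g, x⁆ ∈ Subgroup.lowerCentralSeries (⊤ : Subgroup G) 3 := by
    intro g x hx
    have h1 : ⁅x, g⁆ ∈ Subgroup.lowerCentralSeries (⊤ : Subgroup G) 3 := by
      rw [lcs_succ' (G := G) 2]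
      exact Subgroup.commutator_mem_commutator hx (Subgroup.mem_top g)
    have h2 := (Subgroup.lowerCentralSeries (⊤ : Subgroup G) 3).inv_mem h1
    rwa [commutatorElement_inv] at h2
  have hJ : Subgroup.zpowers x₀ ⊔ Subgroup.lowerCentralSeries (⊤ : Subgroup G) 2 = Subgroup.lowerCentralSeries (⊤ : Subgroup G) 1 := by
    apply Subgroup.eq_of_le_of_card_ge
    · exact sup_le (Subgroup.zpowers_le.mpr hx₀1) (hanti (by omega))
    · obtain ⟨t, ht⟩ :=
        IsPGroup.iff_card.mp (hpG.to_subgroup (Subgroup.zpowers x₀ ⊔ Subgroup.lowerCentralSeries (⊤ : Subgroup G) 2))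
      have hltJ : Subgroup.lowerCentralSeries (⊤ : Subgroup G) 2 < Subgroup.zpowers x₀ ⊔ Subgroup.lowerCentralSeries (⊤ : Subgroup G) 2 := by
        refine lt_of_le_of_ne le_sup_right (fun hh => ?_)
        exact hx₀2 (hh.symm ▸ (le_sup_left (α := Subgroup G) (Subgroup.mem_zpowers x₀)))
      have h1 := hcard_lt hltJ
      rw [hA 2 (by omega) (by omega), ht] at h1
      have h2 : Nat.card ↥(Subgroup.zpowers x₀ ⊔ Subgroup.lowerCentralSeries (⊤ : Subgroup G) 2)
          ≤ Nat.card (Subgroup.lowerCentralSeries (⊤ : Subgroup G) 1) :=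
        Subgroup.card_le_of_le (sup_le (Subgroup.zpowers_le.mpr hx₀1) (hanti (by omega)))
      rw [hA 1 (by omega) (by omega), ht] at h2
      rw [hA 1 (by omega) (by omega), ht]
      have ht1 : n - 1 - 2 < t := (Nat.pow_lt_pow_iff_right hp1).mp h1
      have ht2 : t ≤ n - 1 - 1 := (Nat.pow_le_pow_iff_right hp1).mp h2
      have : t = n - 1 - 1 := by omega
      rw [this]
  -- the homomorphism β : G → G ⧸ γ₄ with kernel G1
  have hmk3 : ∀ y : G, y ∈ Subgroup.lowerCentralSeries (⊤ : Subgroup G) 3 →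
      QuotientGroup.mk' (Subgroup.lowerCentralSeries (⊤ : Subgroup G) 3) y = 1 := by
    intro y hy
    rw [← MonoidHom.mem_ker, QuotientGroup.ker_mk']
    exact hy
  have hcomm23 : ∀ a b : G, a ∈ Subgroup.lowerCentralSeries (⊤ : Subgroup G) 2 → b ∈ Subgroup.lowerCentralSeries (⊤ : Subgroup G) 2 →
      QuotientGroup.mk' (Subgroup.lowerCentralSeries (⊤ : Subgroup G) 3) a * QuotientGroup.mk' (Subgroup.lowerCentralSeries (⊤ : Subgroup G) 3) b
      = QuotientGroup.mk' (Subgroup.lowerCentralSeries (⊤ : Subgroup G) 3) b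
        * QuotientGroup.mk' (Subgroup.lowerCentralSeries (⊤ : Subgroup G) 3) a := by
    intro a b ha hb
    have h1 : ⁅a, b⁆ ∈ Subgroup.lowerCentralSeries (⊤ : Subgroup G) 3 :=
      hanti (by omega) (lcs_comm (G := G) 2 2 (Subgroup.commutator_mem_commutator ha hb))
    have h2 := hmk3 _ h1
    rw [map_commutatorElement, commutatorElement_eq_one_iff_mul_comm] at h2
    exact h2
  let β : G →* G ⧸ Subgroup.lowerCentralSeries (⊤ : Subgroup G) 3 :=
  { toFun := fun g => QuotientGroup.mk' (Subgroup.lowerCentralSeries (⊤ : Subgroup G) 3) ⁅g, x₀⁆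
    map_one' := by
      show QuotientGroup.mk' (Subgroup.lowerCentralSeries (⊤ : Subgroup G) 3) ⁅(1 : G), x₀⁆ = 1
      have h1 : ⁅(1 : G), x₀⁆ = 1 := by group
      rw [h1, map_one]
    map_mul' := by
      intro g h
      show QuotientGroup.mk' (Subgroup.lowerCentralSeries (⊤ : Subgroup G) 3) ⁅g * h, x₀⁆
        = QuotientGroup.mk' (Subgroup.lowerCentralSeries (⊤ : Subgroup G) 3) ⁅g, x₀⁆
          * QuotientGroup.mk' (Subgroup.lowerCentralSeries (⊤ : Subgroup G) 3) ⁅h, x₀⁆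
      have e1 : ⁅g * h, x₀⁆ = (⁅h, x₀⁆ * ⁅⁅h, x₀⁆⁻¹, g⁆) * ⁅g, x₀⁆ := by group
      have m1 : ⁅h, x₀⁆ ∈ Subgroup.lowerCentralSeries (⊤ : Subgroup G) 2 := hcomL2 h x₀ hx₀1
      have m2 : ⁅⁅h, x₀⁆⁻¹, g⁆ ∈ Subgroup.lowerCentralSeries (⊤ : Subgroup G) 3 := by
        rw [lcs_succ' (G := G) 2]
        exact Subgroup.commutator_mem_commutator (inv_mem m1) (Subgroup.mem_top g)
      rw [e1, map_mul, map_mul, hmk3 _ m2, mul_one]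
      exact hcomm23 _ _ m1 (hcomL2 g x₀ hx₀1) }
  have hβ : ∀ g : G, β g = QuotientGroup.mk' (Subgroup.lowerCentralSeries (⊤ : Subgroup G) 3) ⁅g, x₀⁆ := fun g => rfl
  have hSg : ∀ g : G, ⁅g, x₀⁆ ∈ Subgroup.lowerCentralSeries (⊤ : Subgroup G) 3 → g ∈ G1 := by
    intro g hg
    let S : Subgroup G :=
    { carrier := {x | ⁅g, x⁆ ∈ Subgroup.lowerCentralSeries (⊤ : Subgroup G) 3}
      one_mem' := by
        have : ⁅g, (1 : G)⁆ = 1 := by group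
        simp only [Set.mem_setOf_eq, this]
        exact one_mem _
      mul_mem' := by
        intro a b ha hb
        have hab : ⁅g, a * b⁆ = ⁅g, a⁆ * (a * ⁅g, b⁆ * a⁻¹) := by group
        simp only [Set.mem_setOf_eq] at ha hb ⊢
        rw [hab]
        exact mul_mem ha ((Subgroup.lowerCentralSeries_normal (⊤ : Subgroup G) 3).conj_mem _ hb a)
      inv_mem' := by
        intro a ha
        simp only [Set.mem_setOf_eq] at ha ⊢
        have hai : ⁅g, a⁻¹⁆ = a⁻¹ * ⁅g, a⁆⁻¹ * a := by group
        rw [hai]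
        have := (Subgroup.lowerCentralSeries_normal (⊤ : Subgroup G) 3).conj_mem _ (inv_mem ha) a⁻¹
        simpa using this }
    have hle : Subgroup.lowerCentralSeries (⊤ : Subgroup G) 1 ≤ S := by
      rw [← hJ]
      apply sup_le
      · exact Subgroup.zpowers_le.mpr hg
      · intro c hc
        exact hcomL3 g c hc
    rw [hG1]
    intro x hx
    exact hle hx
  have hkerβ : β.ker = G1 := by
    ext g
    rw [MonoidHom.mem_ker, hβ]
    constructor
    · intro h
      apply hSg
      rw [← QuotientGroup.ker_mk' (Subgroup.lowerCentralSeries (⊤ : Subgroup G) 3)]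
      exact h
    · intro h
      exact hmk3 _ ((hG1 g).mp h x₀ hx₀1)
  have hG1card : Nat.card G1 = p ^ (n - 1) := by
    have hrange : β.range ≤
        (Subgroup.lowerCentralSeries (⊤ : Subgroup G) 2).map (QuotientGroup.mk' (Subgroup.lowerCentralSeries (⊤ : Subgroup G) 3)) := by
      rintro y ⟨g, rfl⟩
      exact ⟨⁅g, x₀⁆, hcomL2 g x₀ hx₀1, rfl⟩
    have hM2 : Nat.card
        ((Subgroup.lowerCentralSeries (⊤ : Subgroup G) 2).map (QuotientGroup.mk' (Subgroup.lowerCentralSeries (⊤ : Subgroup G) 3))) ≤ p := by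
      set σ : (Subgroup.lowerCentralSeries (⊤ : Subgroup G) 2) →* G ⧸ Subgroup.lowerCentralSeries (⊤ : Subgroup G) 3 :=
        (QuotientGroup.mk' (Subgroup.lowerCentralSeries (⊤ : Subgroup G) 3)).comp (Subgroup.lowerCentralSeries (⊤ : Subgroup G) 2).subtype with hσ
      have hrσ : σ.range
          = (Subgroup.lowerCentralSeries (⊤ : Subgroup G) 2).map (QuotientGroup.mk' (Subgroup.lowerCentralSeries (⊤ : Subgroup G) 3)) := by
        rw [hσ, MonoidHom.range_comp, Subgroup.range_subtype]
      have hcard2 : Nat.card (Subgroup.lowerCentralSeries (⊤ : Subgroup G) 2)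
          = Nat.card ((Subgroup.lowerCentralSeries (⊤ : Subgroup G) 2) ⧸ σ.ker) * Nat.card σ.ker :=
        Subgroup.card_eq_card_quotient_mul_card_subgroup σ.ker
      have hqr : Nat.card ((Subgroup.lowerCentralSeries (⊤ : Subgroup G) 2) ⧸ σ.ker) = Nat.card σ.range :=
        Nat.card_congr (QuotientGroup.quotientKerEquivRange σ).toEquiv
      have hkle : (Subgroup.lowerCentralSeries (⊤ : Subgroup G) 3).subgroupOf (Subgroup.lowerCentralSeries (⊤ : Subgroup G) 2) ≤ σ.ker := by
        intro x hx
        rw [MonoidHom.mem_ker, hσ, MonoidHom.comp_apply]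
        exact hmk3 _ hx
      have hk3 : Nat.card ((Subgroup.lowerCentralSeries (⊤ : Subgroup G) 3).subgroupOf (Subgroup.lowerCentralSeries (⊤ : Subgroup G) 2))
          = p ^ (n - 4) := by
        rw [Nat.card_congr (Subgroup.subgroupOfEquivOfLe (hanti (by omega : 2 ≤ 3))).toEquiv]
        rw [hA 3 (by omega) (by omega)]
        congr 1
      obtain ⟨a, ha⟩ := IsPGroup.iff_card.mp
        ((hpG.to_quotient (Subgroup.lowerCentralSeries (⊤ : Subgroup G) 3)).to_subgroup σ.range)
      obtain ⟨b, hb⟩ := IsPGroup.iff_card.mp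
        ((hpG.to_subgroup (Subgroup.lowerCentralSeries (⊤ : Subgroup G) 2)).to_subgroup σ.ker)
      have hble : p ^ (n - 4) ≤ p ^ b := by
        rw [← hk3, ← hb]
        exact Subgroup.card_le_of_le hkle
      have habn : a + b = n - 3 := by
        apply hpowinj
        rw [pow_add, ← ha, ← hb, ← hqr, ← hcard2, hA 2 (by omega) (by omega)]
        congr 1
      have hb4 : n - 4 ≤ b := (Nat.pow_le_pow_iff_right hp1).mp hble
      have ha1 : a ≤ 1 := by omega
      rw [hrσ] at ha
      rw [ha]
      calc p ^ a ≤ p ^ 1 := Nat.pow_le_pow_right hp.pos ha1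
        _ = p := pow_one p
    have hQcard : Nat.card (G ⧸ G1) ≤ p := by
      have h1 : Nat.card (G ⧸ β.ker) = Nat.card β.range :=
        Nat.card_congr (QuotientGroup.quotientKerEquivRange β).toEquiv
      rw [hkerβ] at h1
      rw [h1]
      exact le_trans (Subgroup.card_le_of_le hrange) hM2
    obtain ⟨j, hj⟩ := IsPGroup.iff_card.mp (hpG.to_quotient G1)
    obtain ⟨m, hm⟩ := IsPGroup.iff_card.mp (hpG.to_subgroup G1)
    have htot0 := Subgroup.card_eq_card_quotient_mul_card_subgroup G1
    have htot := htot0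
    rw [hcard, hj, hm, ← pow_add] at htot
    have hjm : n = j + m := hpowinj htot
    have hjle : j ≤ 1 := by
      apply (Nat.pow_le_pow_iff_right hp1).mp
      rw [← hj, pow_one]
      exact hQcard
    have hj0 : j ≠ 0 := by
      intro h0
      rw [h0, pow_zero] at hj
      have hcc : Nat.card G1 = Nat.card G := by
        rw [htot0, hj, one_mul]
      exact hG1netop (Subgroup.eq_top_of_card_eq _ hcc)
    rw [hm]
    congr 1
    omega
  -- any subgroup containing G1 equals G1 or ⊤
  have hmax : ∀ H : Subgroup G, G1 ≤ H → H = G1 ∨ H = ⊤ := by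
    intro H hH
    obtain ⟨t, ht⟩ := IsPGroup.iff_card.mp (hpG.to_subgroup H)
    have h1 : p ^ (n - 1) ≤ p ^ t := by
      rw [← ht, ← hG1card]
      exact Subgroup.card_le_of_le hH
    have h2 : p ^ t ≤ p ^ n := by
      rw [← ht, ← hcard]
      exact Subgroup.card_le_card_group H
    have ht1 : n - 1 ≤ t := (Nat.pow_le_pow_iff_right hp1).mp h1
    have ht2 : t ≤ n := (Nat.pow_le_pow_iff_right hp1).mp h2
    rcases (by omega : t = n - 1 ∨ t = n) with h | h
    · left
      exact (Subgroup.eq_of_le_of_card_ge hH (by rw [ht, hG1card, h])).symm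
    · right
      exact Subgroup.eq_top_of_card_eq _ (by rw [ht, hcard, h])
  -- G1 cannot centralize γ_{n-2} (classical), i.e. lcs (n-3)
  have hC : ¬ (G1 ≤ Subgroup.centralizer ((Subgroup.lowerCentralSeries (⊤ : Subgroup G) (n - 3)) : Set G)) := by
    intro hle
    rcases hmax _ hle with h | h
    · exact hl h
    · apply hnebot (n - 2) le_rfl
      rw [show n - 2 = (n - 3) + 1 by omega, lcs_succ' (G := G) (n - 3), eq_bot_iff,
        Subgroup.commutator_le]
      intro y hy g _
      have hgc : g ∈ Subgroup.centralizer ((Subgroup.lowerCentralSeries (⊤ : Subgroup G) (n - 3)) : Set G) := by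
        rw [h]; trivial
      have := Subgroup.mem_centralizer_iff.mp hgc y hy
      rw [Subgroup.mem_bot, commutatorElement_eq_one_iff_mul_comm]
      exact this
  -- Z1 = the center of G1, as a subgroup of G
  set Z1 : Subgroup G := G1 ⊓ Subgroup.centralizer (G1 : Set G) with hZ1def
  haveI hZ1norm : Z1.Normal := by
    constructor
    intro z hz c
    obtain ⟨hz1, hz2⟩ := hz
    refine ⟨hG1n.conj_mem z hz1 c, Subgroup.mem_centralizer_iff.mpr ?_⟩
    intro h hh
    have h4 : c⁻¹ * h * c ∈ G1 := by
      have := hG1n.conj_mem h hh c⁻¹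
      simpa using this
    have h5 := Subgroup.mem_centralizer_iff.mp hz2 _ h4
    calc h * (c * z * c⁻¹) = c * ((c⁻¹ * h * c) * z) * c⁻¹ := by group
      _ = c * (z * (c⁻¹ * h * c)) * c⁻¹ := by rw [h5]
      _ = (c * z * c⁻¹) * h := by group
  have hKleZ1 : Subgroup.lowerCentralSeries (⊤ : Subgroup G) (n - 2) ≤ Z1 := by
    intro z hz
    exact ⟨hKleG1 hz, Subgroup.mem_centralizer_iff.mpr (fun h _ => hKcent z hz h)⟩
  have hZ1le1 : Z1 ≤ Subgroup.lowerCentralSeries (⊤ : Subgroup G) 1 := by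
    by_contra hcon
    obtain ⟨z, hzZ, hz1⟩ := SetLike.not_le_iff_exists.mp hcon
    have hJle : Subgroup.zpowers z ⊔ Subgroup.lowerCentralSeries (⊤ : Subgroup G) 1 ≤ G1 :=
      sup_le (Subgroup.zpowers_le.mpr hzZ.1) hL1G1
    have hJeq : Subgroup.zpowers z ⊔ Subgroup.lowerCentralSeries (⊤ : Subgroup G) 1 = G1 := by
      apply Subgroup.eq_of_le_of_card_ge hJle
      obtain ⟨t, ht⟩ :=
        IsPGroup.iff_card.mp (hpG.to_subgroup (Subgroup.zpowers z ⊔ Subgroup.lowerCentralSeries (⊤ : Subgroup G) 1))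
      have hlt : Subgroup.lowerCentralSeries (⊤ : Subgroup G) 1 < Subgroup.zpowers z ⊔ Subgroup.lowerCentralSeries (⊤ : Subgroup G) 1 := by
        refine lt_of_le_of_ne le_sup_right (fun hh => ?_)
        exact hz1 (le_trans (Subgroup.zpowers_le.mpr (le_sup_left (α := Subgroup G)
          (Subgroup.mem_zpowers z))) hh.ge (Subgroup.mem_zpowers z))
      have h1 := hcard_lt hlt
      rw [hA 1 (by omega) (by omega), ht] at h1
      have ht1 : n - 1 - 1 < t := (Nat.pow_lt_pow_iff_right hp1).mp h1
      rw [hG1card, ht]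
      exact Nat.pow_le_pow_right hp.pos (by omega)
    apply hC
    rw [← hJeq]
    apply sup_le
    · apply Subgroup.zpowers_le.mpr
      apply Subgroup.mem_centralizer_iff.mpr
      intro h hh
      exact Subgroup.mem_centralizer_iff.mp hzZ.2 h (hL1G1 (hanti (by omega) hh))
    · intro a ha
      apply Subgroup.mem_centralizer_iff.mpr
      intro y hy
      have h1 : ⁅y, a⁆ ∈ Subgroup.lowerCentralSeries (⊤ : Subgroup G) (n - 1) := by
        have h2 := lcs_comm (G := G) 1 (n - 3) (Subgroup.commutator_mem_commutator hy ha)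
        rwa [show n - 3 + 1 + 1 = n - 1 by omega] at h2
      rw [hmc₁] at h1
      exact commutatorElement_eq_one_iff_mul_comm.mp (Subgroup.mem_bot.mp h1)
  have hnotle : ¬ (Subgroup.lowerCentralSeries (⊤ : Subgroup G) (n - 3) ≤ Z1) := by
    intro hle
    apply hC
    intro g hg
    apply Subgroup.mem_centralizer_iff.mpr
    intro y hy
    exact (Subgroup.mem_centralizer_iff.mp (hle hy).2 g hg).symm
  have hST : ∀ j, 1 ≤ j → j ≤ n - 3 → Z1 ≤ Subgroup.lowerCentralSeries (⊤ : Subgroup G) j →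
      ¬ (Z1 ≤ Subgroup.lowerCentralSeries (⊤ : Subgroup G) (j + 1)) → Subgroup.lowerCentralSeries (⊤ : Subgroup G) (j + 1) ≤ Z1 := by
    intro j hj1 hj2 hZle hnot
    have hsup : Z1 ⊔ Subgroup.lowerCentralSeries (⊤ : Subgroup G) (j + 1) = Subgroup.lowerCentralSeries (⊤ : Subgroup G) j := by
      apply Subgroup.eq_of_le_of_card_ge (sup_le hZle (hanti (Nat.le_succ j)))
      obtain ⟨t, ht⟩ :=
        IsPGroup.iff_card.mp (hpG.to_subgroup (Z1 ⊔ Subgroup.lowerCentralSeries (⊤ : Subgroup G) (j + 1)))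
      have hlt : Subgroup.lowerCentralSeries (⊤ : Subgroup G) (j + 1) < Z1 ⊔ Subgroup.lowerCentralSeries (⊤ : Subgroup G) (j + 1) :=
        lt_of_le_of_ne le_sup_right (fun hh => hnot (le_trans le_sup_left hh.ge))
      have h1 := hcard_lt hlt
      rw [hA (j + 1) (by omega) (by omega), ht] at h1
      have ht1 : n - 1 - (j + 1) < t := (Nat.pow_lt_pow_iff_right hp1).mp h1
      rw [hA j (by omega) (by omega), ht]
      exact Nat.pow_le_pow_right hp.pos (by omega)
    have hS : ∀ k, Subgroup.lowerCentralSeries (⊤ : Subgroup G) (j + k) ≤ Z1 ⊔ Subgroup.lowerCentralSeries (⊤ : Subgroup G) (j + k + 1) := by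
      intro k
      induction k with
      | zero => exact le_of_eq hsup.symm
      | succ k ih =>
          have hstep : Subgroup.lowerCentralSeries (⊤ : Subgroup G) (j + (k + 1))
              = ⁅Subgroup.lowerCentralSeries (⊤ : Subgroup G) (j + k), ⊤⁆ := rfl
          rw [hstep, Subgroup.commutator_le]
          intro x hx g _
          have hx' : x ∈ (Z1 : Set G) * ((Subgroup.lowerCentralSeries (⊤ : Subgroup G) (j + k + 1)) : Set G) := by
            rw [← Subgroup.mul_normal]
            exact ih hx
          obtain ⟨a, haZ, b, hbL, rfl⟩ := hx'
          have hid : ⁅a * b, g⁆ = (a * ⁅b, g⁆ * a⁻¹) * ⁅a, g⁆ := by group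
          rw [hid]
          apply mul_mem
          · apply le_sup_right (α := Subgroup G)
            show a * ⁅b, g⁆ * a⁻¹ ∈ Subgroup.lowerCentralSeries (⊤ : Subgroup G) (j + (k + 1) + 1)
            apply (Subgroup.lowerCentralSeries_normal (⊤ : Subgroup G) _).conj_mem
            have : ⁅b, g⁆ ∈ Subgroup.lowerCentralSeries (⊤ : Subgroup G) (j + k + 1 + 1) := by
              rw [lcs_succ' (G := G) (j + k + 1)]
              exact Subgroup.commutator_mem_commutator hbL (Subgroup.mem_top g)
            rwa [show j + k + 1 + 1 = j + (k + 1) + 1 by omega] at this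
          · apply le_sup_left (α := Subgroup G)
            show ⁅a, g⁆ ∈ Z1
            have hconj : g * a⁻¹ * g⁻¹ ∈ Z1 := hZ1norm.conj_mem a⁻¹ (inv_mem haZ) g
            have hid2 : ⁅a, g⁆ = a * (g * a⁻¹ * g⁻¹) := by group
            rw [hid2]
            exact mul_mem haZ hconj
    have hT : ∀ k, Subgroup.lowerCentralSeries (⊤ : Subgroup G) (j + 1) ≤ Z1 ⊔ Subgroup.lowerCentralSeries (⊤ : Subgroup G) (j + 1 + k) := by
      intro k
      induction k with
      | zero => exact le_sup_right
      | succ k ih =>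
          have hSk := hS (k + 1)
          rw [show j + (k + 1) + 1 = j + 1 + (k + 1) by omega,
            show j + (k + 1) = j + 1 + k by omega] at hSk
          refine le_trans ih (sup_le le_sup_left (le_trans hSk (sup_le le_sup_left le_sup_right)))
    have hfin := hT (n - 1 - (j + 1))
    rw [show j + 1 + (n - 1 - (j + 1)) = n - 1 by omega, hmc₁, sup_bot_eq] at hfin
    exact hfin
  have hZ1K : Z1 = Subgroup.lowerCentralSeries (⊤ : Subgroup G) (n - 2) := by
    have key : ∀ d, d ≤ n - 3 → Z1 ≤ Subgroup.lowerCentralSeries (⊤ : Subgroup G) (n - 2 - d) →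
        Z1 = Subgroup.lowerCentralSeries (⊤ : Subgroup G) (n - 2) := by
      intro d
      induction d with
      | zero =>
          intro _ hle
          exact le_antisymm (by simpa using hle) hKleZ1
      | succ d ih =>
          intro hd hle
          set j := n - 2 - (d + 1) with hjdef
          by_cases hcase : Z1 ≤ Subgroup.lowerCentralSeries (⊤ : Subgroup G) (j + 1)
          · apply ih (by omega)
            rwa [show n - 2 - d = j + 1 by omega]
          · have hj1 : 1 ≤ j := by omega
            have hj2 : j ≤ n - 3 := by omega
            have hup := hST j hj1 hj2 hle hcase
            by_cases hcase2 : j + 1 ≤ n - 3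
            · exact absurd (le_trans (hanti hcase2) hup) hnotle
            · -- j = n - 3
              have hjeq : j = n - 3 := by omega
              exfalso
              apply hnotle
              have hKlt : Subgroup.lowerCentralSeries (⊤ : Subgroup G) (n - 2) < Z1 := by
                refine lt_of_le_of_ne hKleZ1 (fun hh => ?_)
                rw [show j + 1 = n - 2 by omega] at hcase
                exact hcase (le_of_eq hh.symm)
              have h1 := hcard_lt hKlt
              rw [hKcard] at h1
              obtain ⟨t, ht⟩ := IsPGroup.iff_card.mp (hpG.to_subgroup Z1)
              have hZle3 : Z1 ≤ Subgroup.lowerCentralSeries (⊤ : Subgroup G) (n - 3) := by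
                rwa [hjeq] at hle
              have h2 : Nat.card Z1 ≤ Nat.card (Subgroup.lowerCentralSeries (⊤ : Subgroup G) (n - 3)) :=
                Subgroup.card_le_of_le hZle3
              rw [hA (n - 3) (by omega) (by omega), ht] at h2
              rw [ht] at h1
              have ht1 : 1 < t := by
                have h1' : p ^ 1 < p ^ t := by rw [pow_one]; exact h1
                exact (Nat.pow_lt_pow_iff_right hp1).mp h1'
              have ht2 : t ≤ n - 1 - (n - 3) := (Nat.pow_le_pow_iff_right hp1).mp h2
              have hteq : t = n - 1 - (n - 3) := by omega
              have heq : Z1 = Subgroup.lowerCentralSeries (⊤ : Subgroup G) (n - 3) := by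
                apply Subgroup.eq_of_le_of_card_ge hZle3
                rw [hA (n - 3) (by omega) (by omega), ht, hteq]
              exact le_of_eq heq.symm
    apply key (n - 3) le_rfl
    rwa [show n - 2 - (n - 3) = 1 by omega]
  -- K := γ_{n-1} (classical) is φ-invariant
  have hinv : Subgroup.map φ ((Subgroup.lowerCentralSeries (⊤ : Subgroup G) (n - 2)).subgroupOf G1)
      ≤ Subgroup.lowerCentralSeries (⊤ : Subgroup G) (n - 2) := by
    by_cases hinj : Function.Injective φ
    · have hMcard : Nat.card φ.range = p ^ (n - 1) := by
        rw [← hG1card]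
        exact (Nat.card_congr (MonoidHom.ofInjective hinj).toEquiv).symm
      by_cases hKM : Subgroup.lowerCentralSeries (⊤ : Subgroup G) (n - 2) ≤ φ.range
      · -- the image of K is exactly K
        have hXcard : Nat.card
            (Subgroup.map φ ((Subgroup.lowerCentralSeries (⊤ : Subgroup G) (n - 2)).subgroupOf G1)) = p := by
          have e1 := Nat.card_congr (Subgroup.equivMapOfInjective
            ((Subgroup.lowerCentralSeries (⊤ : Subgroup G) (n - 2)).subgroupOf G1) φ hinj).toEquiv
          have e2 := Nat.card_congr (Subgroup.subgroupOfEquivOfLe hKleG1).toEquiv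
          rw [← e1, e2, hKcard]
        have hKleX : Subgroup.lowerCentralSeries (⊤ : Subgroup G) (n - 2)
            ≤ Subgroup.map φ ((Subgroup.lowerCentralSeries (⊤ : Subgroup G) (n - 2)).subgroupOf G1) := by
          intro k hk
          obtain ⟨u, hu⟩ := hKM hk
          have huZ : (u : G) ∈ Z1 := by
            refine ⟨u.2, Subgroup.mem_centralizer_iff.mpr ?_⟩
            intro h hh
            have h5 : φ (⟨h, hh⟩ * u) = φ (u * ⟨h, hh⟩) := by
              rw [map_mul, map_mul, hu]
              exact hKcent k hk (φ ⟨h, hh⟩)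
            have h6 := hinj h5
            exact congrArg Subtype.val h6
          have huK : (u : G) ∈ Subgroup.lowerCentralSeries (⊤ : Subgroup G) (n - 2) := hZ1K ▸ huZ
          exact ⟨u, Subgroup.mem_subgroupOf.mpr huK, hu⟩
        have heq := Subgroup.eq_of_le_of_card_ge hKleX (by rw [hXcard, hKcard])
        exact le_of_eq heq.symm
      · -- K is not inside the image: then the image of K is central, contained in K
        obtain ⟨k0, hk0K, hk0M⟩ := SetLike.not_le_iff_exists.mp hKM
        have hsupM : φ.range ⊔ Subgroup.lowerCentralSeries (⊤ : Subgroup G) (n - 2) = ⊤ := by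
          obtain ⟨t, ht⟩ := IsPGroup.iff_card.mp
            (hpG.to_subgroup (φ.range ⊔ Subgroup.lowerCentralSeries (⊤ : Subgroup G) (n - 2)))
          have hlt : φ.range < φ.range ⊔ Subgroup.lowerCentralSeries (⊤ : Subgroup G) (n - 2) := by
            refine lt_of_le_of_ne le_sup_left (fun hh => ?_)
            exact hk0M (hh.ge (le_sup_right (α := Subgroup G) hk0K))
          have h1 := hcard_lt hlt
          rw [hMcard, ht] at h1
          have ht1 : n - 1 < t := (Nat.pow_lt_pow_iff_right hp1).mp h1
          have h2 : p ^ t ≤ p ^ n := by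
            rw [← ht, ← hcard]
            exact Subgroup.card_le_card_group _
          have ht2 : t ≤ n := (Nat.pow_le_pow_iff_right hp1).mp h2
          apply Subgroup.eq_top_of_card_eq
          rw [ht, hcard, show t = n by omega]
        rintro y ⟨w, hw, rfl⟩
        rw [SetLike.mem_coe, Subgroup.mem_subgroupOf] at hw
        have hycent : ∀ m ∈ φ.range, m * φ w = φ w * m := by
          rintro m ⟨u, rfl⟩
          rw [← map_mul, ← map_mul]
          congr 1
          apply Subtype.ext
          have hwZ : (w : G) ∈ Z1 := hKleZ1 hw
          exact Subgroup.mem_centralizer_iff.mp hwZ.2 (u : G) u.2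
        have hcent : ∀ g : G, g * φ w = φ w * g := by
          intro g
          have hg : g ∈ φ.range ⊔ Subgroup.lowerCentralSeries (⊤ : Subgroup G) (n - 2) := by
            rw [hsupM]; trivial
          have hg' : g ∈ (φ.range : Set G) * ((Subgroup.lowerCentralSeries (⊤ : Subgroup G) (n - 2)) : Set G) := by
            rw [← Subgroup.mul_normal]
            exact hg
          obtain ⟨m, hm, k, hk, rfl⟩ := hg'
          have h1 := hycent m hm
          have h2 : k * φ w = φ w * k := (hKcent k hk (φ w)).symm
          calc (m * k) * φ w = m * (k * φ w) := by group
            _ = m * (φ w * k) := by rw [h2]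
            _ = (m * φ w) * k := by group
            _ = (φ w * m) * k := by rw [h1]
            _ = φ w * (m * k) := by group
        have hZ : φ w ∈ Z1 :=
          ⟨hcentG1 _ hcent, Subgroup.mem_centralizer_iff.mpr (fun h _ => hcent h)⟩
        exact hZ1K ▸ hZ
    · -- non-injective case: K is contained in the kernel
      have hkerne : φ.ker ≠ ⊥ := fun h => hinj ((MonoidHom.ker_eq_bot_iff φ).mp h)
      obtain ⟨z, hzker, hzne, hzcent⟩ := aux_center (hpG.to_subgroup G1) φ.ker hkerne
      have hzZ1 : (z : G) ∈ Z1 := by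
        refine ⟨z.2, Subgroup.mem_centralizer_iff.mpr ?_⟩
        intro h hh
        have := Subgroup.mem_center_iff.mp hzcent ⟨h, hh⟩
        exact congrArg Subtype.val this
      have hzK : (z : G) ∈ Subgroup.lowerCentralSeries (⊤ : Subgroup G) (n - 2) := hZ1K ▸ hzZ1
      have hzpow : Subgroup.zpowers (z : G) = Subgroup.lowerCentralSeries (⊤ : Subgroup G) (n - 2) := by
        apply Subgroup.eq_of_le_of_card_ge (Subgroup.zpowers_le.mpr hzK)
        obtain ⟨t, ht⟩ := IsPGroup.iff_card.mp (hpG.to_subgroup (Subgroup.zpowers (z : G)))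
        have hle : p ^ t ≤ p := by
          rw [← ht, ← hKcard]
          exact Subgroup.card_le_of_le (Subgroup.zpowers_le.mpr hzK)
        have ht0 : t ≠ 0 := by
          intro h0
          rw [h0, pow_zero] at ht
          have hb : Subgroup.zpowers (z : G) = ⊥ := Subgroup.eq_bot_of_card_eq _ ht
          have hz1 : (z : G) = 1 := by
            rw [← Subgroup.mem_bot, ← hb]
            exact Subgroup.mem_zpowers _
          exact hzne (Subtype.ext hz1)
        rw [hKcard, ht]
        calc p = p ^ 1 := (pow_one p).symm
          _ ≤ p ^ t := Nat.pow_le_pow_right hp.pos (by omega)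
      rintro y ⟨w, hw, rfl⟩
      rw [SetLike.mem_coe, Subgroup.mem_subgroupOf, ← hzpow] at hw
      obtain ⟨m, hm⟩ := Subgroup.mem_zpowers_iff.mp hw
      have hwz : w = z ^ m := by
        apply Subtype.ext
        rw [← hm]
        simp
      rw [hwz, map_zpow]
      have hz1 : φ z = 1 := hzker
      rw [hz1, one_zpow]
      exact one_mem _
  exact hmc₂ (hs (Subgroup.lowerCentralSeries (⊤ : Subgroup G) (n - 2)) hKleG1 inferInstance hinv)
end
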